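/- arXiv:0808.1270 — 7 statements merged into one kernel-verified Lean document; each statement's English description precedes it below -/
import Mathlib

section
/- Let p ≥ 3 be an integer and set λ = 2·cos(π/p). The matrices S = [[1, λ],[0, 1]] and T = [[0, −1],[1, 0]] in SL(2,ℝ) satisfy (S·T)^p = −I, where I is the 2×2 identity matrix. (Equivalently, in PSL(2,ℝ) the Hecke group G_p = ⟨S, T⟩ satisfies the relation (ST)^p = I.) -/
/-- For an integer `p ≥ 3` and `λ = 2·cos(π/p)`, the matrices
`S = [[1, λ],[0, 1]]` and `T = [[0, −1],[1, 0]]` in `SL(2,ℝ)` satisfy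
`(S·T)^p = −I`; equivalently, in `PSL(2,ℝ)` the Hecke group relation
`(ST)^p = I` holds. -/
theorem hecke_group_second_relation (p : ℕ) (hp : 3 ≤ p) :
    (!![(1 : ℝ), 2 * Real.cos (Real.pi / p); 0, 1] *
        !![(0 : ℝ), -1; 1, 0]) ^ p =
      -(1 : Matrix (Fin 2) (Fin 2) ℝ) := by
  have hppos : (0:ℝ) < p := by exact_mod_cast (by omega : 0 < p)
  have hp3 : (3:ℝ) ≤ p := by exact_mod_cast hp
  set θ := Real.pi / p with hθdef
  have hθ0 : 0 < θ := div_pos Real.pi_pos hppos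
  have hθπ : θ < Real.pi := by
    rw [hθdef, div_lt_iff₀ hppos]
    nlinarith [Real.pi_pos]
  have hs : Real.sin θ ≠ 0 := ne_of_gt (Real.sin_pos_of_pos_of_lt_pi hθ0 hθπ)
  have hM : !![(1 : ℝ), 2 * Real.cos θ; 0, 1] * !![(0 : ℝ), -1; 1, 0] =
      !![2 * Real.cos θ, -1; 1, 0] := by
    rw [Matrix.mul_fin_two]; norm_num
  rw [hM]
  have key : ∀ n : ℕ, !![2 * Real.cos θ, -1; 1, 0] ^ (n+1) =
      !![Real.sin ((n+2) * θ) / Real.sin θ, -(Real.sin ((n+1) * θ) / Real.sin θ);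
         Real.sin ((n+1) * θ) / Real.sin θ, -(Real.sin (n * θ) / Real.sin θ)] := by
    intro n
    induction n with
    | zero =>
      have h2 : Real.sin (2 * θ) = 2 * Real.sin θ * Real.cos θ := Real.sin_two_mul θ
      ext i j
      fin_cases i <;> fin_cases j <;> push_cast <;> simp [h2] <;> field_simp <;> ring
    | succ n ih =>
      rw [pow_succ, ih, Matrix.mul_fin_two]
      have h0 : ((n:ℝ)+1+1) = ((n:ℝ)+2) := by ring
      have h1 : Real.sin (((n:ℝ)+1+2) * θ) =
          2 * Real.cos θ * Real.sin (((n:ℝ)+2) * θ) - Real.sin (((n:ℝ)+1) * θ) := by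
        have e1 : ((n:ℝ)+1+2) * θ = ((n:ℝ)+2) * θ + θ := by ring
        have e2 : ((n:ℝ)+1) * θ = ((n:ℝ)+2) * θ - θ := by ring
        rw [e1, e2, Real.sin_add, Real.sin_sub]; ring
      have h1' : Real.sin (((n:ℝ)+2) * θ) =
          2 * Real.cos θ * Real.sin (((n:ℝ)+1) * θ) - Real.sin ((n:ℝ) * θ) := by
        have e1 : ((n:ℝ)+2) * θ = ((n:ℝ)+1) * θ + θ := by ring
        have e2 : ((n:ℝ)) * θ = ((n:ℝ)+1) * θ - θ := by ring
        rw [e1, e2, Real.sin_add, Real.sin_sub]; ring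
      ext i j
      fin_cases i <;> fin_cases j <;> push_cast <;> simp [h0] <;>
        first
          | ring1
          | linear_combination (-1/Real.sin θ) * h1
          | linear_combination (-1/Real.sin θ) * h1'
          | linear_combination (1/Real.sin θ) * h1
          | linear_combination (1/Real.sin θ) * h1'
  obtain ⟨q, hq⟩ : ∃ q, p = q + 1 := ⟨p-1, by omega⟩
  rw [hq, key q]
  have hpq : (q:ℝ) + 1 = p := by rw [hq]; push_cast; ring
  have h1 : ((q:ℝ)+1) * θ = Real.pi := by
    rw [hpq, hθdef]; field_simp
  have h2 : ((q:ℝ)+2) * θ = Real.pi + θ := by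
    have e : ((q:ℝ)+2) * θ = ((q:ℝ)+1) * θ + θ := by ring
    rw [e, h1]
  have h3 : (q:ℝ) * θ = Real.pi - θ := by
    have e : (q:ℝ) * θ = ((q:ℝ)+1) * θ - θ := by ring
    rw [e, h1]
  have s1 : Real.sin (((q:ℝ)+2) * θ) = -Real.sin θ := by
    rw [h2, Real.sin_add]; simp
  have s2 : Real.sin (((q:ℝ)+1) * θ) = 0 := by rw [h1]; simp
  have s3 : Real.sin ((q:ℝ) * θ) = Real.sin θ := by rw [h3, Real.sin_pi_sub]
  push_cast
  rw [s1, s2, s3]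
  ext i j
  fin_cases i <;> fin_cases j <;>
    simp [Matrix.neg_apply, Matrix.one_apply] <;> simp [neg_div, hs]
end

section
/- Let p ≥ 3 be an integer, θ = π/p, λ = 2·cos θ, and U = S·T = [[λ, −1],[1, 0]] ∈ SL(2,ℝ). Then: (i) for every integer m with 1 ≤ m ≤ p, U^m = (sin(mθ)/sin θ)·U − (sin((m−1)θ)/sin θ)·I; (ii) the (2,2) entry of U is 0, so the Möbius action of U sends 0 to ∞; (iii) for 2 ≤ m ≤ p the Möbius image U^m·0 equals sin(mθ)/sin((m−1)θ); in particular U^p·0 = 0 and the chain 0 = U^p·0 < U^{p−1}·0 < ⋯ < U^2·0 of strict inequalities holds, so the intervals I_j = [U^{p−j+2}·0, U^{p−j+1}·0) for 1 ≤ j ≤ p (reading U^{p+1}·0 as −∞ and U·0 as ∞) partition [−∞, ∞). -/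
/-- For an integer `p ≥ 3`, `θ = π/p`, `λ = 2cos θ`, `U = ST = [[λ,−1],[1,0]]`:
(i) for `1 ≤ m ≤ p`, `U^m = (sin(mθ)/sin θ)·U − (sin((m−1)θ)/sin θ)·I`;
(ii) the `(2,2)` entry of `U` is `0` (so `U·0 = ∞` under the Möbius action);
(iii) for `2 ≤ m ≤ p` the Möbius image `U^m·0` equals `sin(mθ)/sin((m−1)θ)`;
in particular `U^p·0 = 0`, the chain `0 = U^p·0 < U^{p−1}·0 < ⋯ < U^2·0`
holds, and the corresponding intervals
`I_1 = [−∞, U^p·0)`, `I_j = [U^{p−j+2}·0, U^{p−j+1}·0)` for `1 < j < p`,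
`I_p = [U^2·0, ∞)` partition the (extended) real line. -/
theorem hecke_U_powers_and_interval_partition
    (p : ℕ) (hp : 3 ≤ p)
    (θ : ℝ) (hθ : θ = Real.pi / p)
    (lam : ℝ) (hlam : lam = 2 * Real.cos θ)
    (U : Matrix (Fin 2) (Fin 2) ℝ) (hU : U = !![lam, -1; 1, 0])
    (f : ℕ → ℝ) (hf : ∀ m : ℕ, f m = (U ^ m) 0 1 / (U ^ m) 1 1)
    (Iv : ℕ → Set ℝ)
    (hIv : ∀ j : ℕ, Iv j =
      if j = 1 then Set.Iio (f p)
      else if j = p then Set.Ici (f 2)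
      else Set.Ico (f (p - j + 2)) (f (p - j + 1))) :
    (∀ m : ℕ, 1 ≤ m → m ≤ p →
      U ^ m = (Real.sin (m * θ) / Real.sin θ) • U
        - (Real.sin (((m : ℝ) - 1) * θ) / Real.sin θ) •
            (1 : Matrix (Fin 2) (Fin 2) ℝ)) ∧
    U 1 1 = 0 ∧
    (∀ m : ℕ, 2 ≤ m → m ≤ p →
      f m = Real.sin (m * θ) / Real.sin (((m : ℝ) - 1) * θ)) ∧
    f p = 0 ∧
    (∀ m : ℕ, 2 ≤ m → m < p → f (m + 1) < f m) ∧
    (∀ x : ℝ, ∃! j : ℕ, j ∈ Finset.Icc 1 p ∧ x ∈ Iv j) := by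
  have hp0 : (0:ℝ) < p := by positivity
  have hθpos : 0 < θ := by
    rw [hθ]; positivity
  have hp3 : (3:ℝ) ≤ (p:ℝ) := by exact_mod_cast hp
  have hθlt : θ < Real.pi := by
    rw [hθ, div_lt_iff₀ hp0]
    nlinarith [Real.pi_pos]
  have hs : 0 < Real.sin θ := Real.sin_pos_of_pos_of_lt_pi hθpos hθlt
  have hpos : ∀ k : ℕ, 1 ≤ k → k < p → 0 < Real.sin (k * θ) := by
    intro k hk1 hkp
    apply Real.sin_pos_of_pos_of_lt_pi
    · positivity
    · rw [hθ, ← mul_div_assoc, div_lt_iff₀ hp0]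
      have : (k:ℝ) < p := by exact_mod_cast hkp
      nlinarith [Real.pi_pos]
  -- the square of U
  have h2 : U * U = lam • U - 1 := by
    subst hU
    ext i j
    fin_cases i <;> fin_cases j <;>
      simp [Matrix.mul_apply, Fin.sum_univ_two, Matrix.one_apply] <;> ring
  -- part (i), for all m
  have key : ∀ m : ℕ, U ^ m = (Real.sin (m * θ) / Real.sin θ) • U
      - (Real.sin (((m : ℝ) - 1) * θ) / Real.sin θ) • (1 : Matrix (Fin 2) (Fin 2) ℝ) := by
    intro m
    induction m with
    | zero =>
      rw [pow_zero, show ((((0:ℕ):ℝ)) - 1) * θ = -θ by push_cast; ring,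
        show (((0:ℕ):ℝ)) * θ = 0 by push_cast; ring, Real.sin_zero, zero_div, zero_smul,
        zero_sub, Real.sin_neg, neg_div, neg_smul, neg_neg, div_self hs.ne', one_smul]
    | succ n ih =>
      have e1 : Real.sin ((n:ℝ) * θ) / Real.sin θ * lam
          - Real.sin (((n:ℝ) - 1) * θ) / Real.sin θ
          = Real.sin (((n:ℝ) + 1) * θ) / Real.sin θ := by
        rw [hlam]
        field_simp
        rw [show θ * ((n:ℝ) + 1) = (n:ℝ) * θ + θ by ring,
          show θ * ((n:ℝ) - 1) = (n:ℝ) * θ - θ by ring, Real.sin_add, Real.sin_sub]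
        ring
      rw [pow_succ, ih, sub_mul, Matrix.smul_mul, Matrix.smul_mul, one_mul, h2]
      push_cast
      rw [show ((n:ℝ) + 1 - 1) = (n:ℝ) by ring, ← e1]
      rw [smul_sub, smul_smul]
      module
  -- entries of U ^ m
  have e01 : ∀ m : ℕ, (U ^ m) 0 1 = -(Real.sin (m * θ) / Real.sin θ) := by
    intro m
    rw [key m, hU]
    simp [Matrix.sub_apply, Matrix.one_apply]
  have e11 : ∀ m : ℕ, (U ^ m) 1 1 = -(Real.sin (((m:ℝ) - 1) * θ) / Real.sin θ) := by
    intro m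
    rw [key m, hU]
    simp [Matrix.sub_apply, Matrix.one_apply]
  -- formula for f, for all m
  have hform : ∀ m : ℕ, f m = Real.sin (m * θ) / Real.sin (((m:ℝ) - 1) * θ) := by
    intro m
    rw [hf m, e01 m, e11 m, neg_div_neg_eq]
    rcases eq_or_ne (Real.sin (((m:ℝ) - 1) * θ)) 0 with h|h
    · simp [h]
    · field_simp
  -- f p = 0
  have hfp : f p = 0 := by
    rw [hform p]
    have : (p:ℝ) * θ = Real.pi := by
      rw [hθ]; field_simp
    rw [this, Real.sin_pi, zero_div]
  -- cast helper : for 1 ≤ m, ((m:ℝ) - 1) = ((m-1 : ℕ) : ℝ)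
  have hcast : ∀ m : ℕ, 1 ≤ m → ((m:ℝ) - 1) = ((m - 1 : ℕ) : ℝ) := by
    intro m hm
    have : (m - 1 : ℕ) + 1 = m := by omega
    push_cast [this]
    ring_nf
    rw [← this]
    push_cast
    ring
  -- strict decrease
  have step : ∀ m : ℕ, 2 ≤ m → m < p → f (m + 1) < f m := by
    intro m hm2 hmp
    have h1 : 0 < Real.sin ((m:ℝ) * θ) := hpos m (by omega) hmp
    have h2' : 0 < Real.sin (((m:ℝ) - 1) * θ) := by
      rw [hcast m (by omega)]
      exact hpos (m - 1) (by omega) (by omega)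
    rw [hform (m + 1), hform m]
    push_cast
    rw [show ((m:ℝ) + 1 - 1) = (m:ℝ) by ring]
    rw [div_lt_div_iff₀ h1 h2']
    rw [show ((m:ℝ) + 1) * θ = (m:ℝ) * θ + θ by ring,
      show ((m:ℝ) - 1) * θ = (m:ℝ) * θ - θ by ring, Real.sin_add, Real.sin_sub]
    nlinarith [Real.sin_sq_add_cos_sq θ, Real.sin_sq_add_cos_sq ((m:ℝ) * θ),
      mul_pos hs hs]
  -- weak monotonicity
  have mono : ∀ a b : ℕ, 2 ≤ a → a ≤ b → b ≤ p → f b ≤ f a := by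
    intro a b ha hab
    induction b, hab using Nat.le_induction with
    | base => intro _; exact le_refl _
    | succ n hn ih =>
      intro h
      exact le_trans (le_of_lt (step n (le_trans ha hn) (by omega))) (ih (by omega))
  -- claims about the intervals
  have claimA : ∀ j : ℕ, 1 ≤ j → j < p → ∀ x : ℝ, x ∈ Iv j → x < f (p - j + 1) := by
    intro j hj1 hjp x hx
    rw [hIv j] at hx
    rcases eq_or_ne j 1 with h|h
    · subst h
      rw [if_pos rfl] at hx
      rw [show p - 1 + 1 = p by omega]
      exact hx
    · rw [if_neg h, if_neg (by omega)] at hx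
      exact hx.2
  have claimB : ∀ k : ℕ, 2 ≤ k → k ≤ p → ∀ x : ℝ, x ∈ Iv k → f (p - k + 2) ≤ x := by
    intro k hk2 hkp x hx
    rw [hIv k] at hx
    rcases eq_or_ne k p with h|h
    · rw [h, if_neg (by omega), if_pos rfl] at hx
      rw [h, show p - p + 2 = 2 by omega]
      exact hx
    · rw [if_neg (by omega), if_neg h] at hx
      exact hx.1
  have aux : ∀ j k : ℕ, 1 ≤ j → j < k → k ≤ p → ∀ x : ℝ, x ∈ Iv j → x ∈ Iv k → False := by
    intro j k hj hjk hkp x hxj hxk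
    have hA := claimA j hj (lt_of_lt_of_le hjk hkp) x hxj
    have hB := claimB k (by omega) hkp x hxk
    have hm := mono (p - k + 2) (p - j + 1) (by omega) (by omega) (by omega)
    linarith
  have huniq : ∀ (x : ℝ) (j k : ℕ), j ∈ Finset.Icc 1 p → k ∈ Finset.Icc 1 p →
      x ∈ Iv j → x ∈ Iv k → j = k := by
    intro x j k hj hk hxj hxk
    rw [Finset.mem_Icc] at hj hk
    rcases lt_trichotomy j k with h|h|h
    · exact absurd (aux j k hj.1 h hk.2 x hxj hxk) (by simp)
    · exact h
    · exact absurd (aux k j hk.1 h hj.2 x hxk hxj) (by simp)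
  -- existence
  have hexists : ∀ x : ℝ, ∃ j : ℕ, j ∈ Finset.Icc 1 p ∧ x ∈ Iv j := by
    intro x
    by_cases hx0 : x < f p
    · refine ⟨1, by rw [Finset.mem_Icc]; omega, ?_⟩
      rw [hIv 1, if_pos rfl]
      exact hx0
    by_cases hx2 : f 2 ≤ x
    · refine ⟨p, by rw [Finset.mem_Icc]; omega, ?_⟩
      rw [hIv p, if_neg (by omega), if_pos rfl]
      exact hx2
    push_neg at hx0 hx2
    have hS2 : 2 ∈ (Finset.Icc 2 p).filter (fun m => x < f m) := by
      rw [Finset.mem_filter, Finset.mem_Icc]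
      exact ⟨⟨le_refl _, by omega⟩, hx2⟩
    set S := (Finset.Icc 2 p).filter (fun m => x < f m) with hSdef
    have hSne : S.Nonempty := ⟨2, hS2⟩
    set m := S.max' hSne with hmdef
    have hmS : m ∈ S := S.max'_mem hSne
    rw [hSdef, Finset.mem_filter, Finset.mem_Icc] at hmS
    obtain ⟨⟨hm2, hmp⟩, hxm⟩ := hmS
    have hmp' : m < p := by
      rcases eq_or_ne m p with h|h
      · exfalso; rw [h] at hxm; linarith
      · omega
    have hm1 : f (m + 1) ≤ x := by
      by_contra h
      push_neg at h
      have : m + 1 ∈ S := by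
        rw [hSdef, Finset.mem_filter, Finset.mem_Icc]
        exact ⟨⟨by omega, by omega⟩, h⟩
      have := S.le_max' _ this
      omega
    refine ⟨p - m + 1, by rw [Finset.mem_Icc]; omega, ?_⟩
    rw [hIv (p - m + 1), if_neg (by omega), if_neg (by omega),
      show p - (p - m + 1) + 2 = m + 1 by omega, show p - (p - m + 1) + 1 = m by omega]
    exact ⟨hm1, hxm⟩
  refine ⟨fun m _ _ => key m, by rw [hU]; simp, fun m _ _ => hform m, hfp, step, ?_⟩
  intro x
  obtain ⟨j, hj, hxj⟩ := hexists x
  exact ⟨j, ⟨hj, hxj⟩, fun k ⟨hk, hxk⟩ => huniq x k j hk hj hxk hxj⟩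
end

section
/- Let k be a positive integer and let α, α′ be distinct complex numbers. Then for every z ∈ ℂ with z ≠ α and z ≠ α′: (α − α′)^k / ((z − α)^k (z − α′)^k) = Σ_{m=1}^{k} (−1)^{m−k} · C(2k−m−1, k−1) · (α − α′)^{m−k} · (z − α)^{−m} + Σ_{n=1}^{k} (−1)^{k} · C(2k−n−1, k−1) · (α − α′)^{n−k} · (z − α′)^{−n}, where C(·,·) denotes the binomial coefficient and all powers are integer powers. -/
open Finset

lemma keyP : ∀ a b : ℕ, ∀ u v : ℂ,
    (v - u) ^ (a + b + 1) =
      (∑ i ∈ range (a+1), (-1:ℂ)^(a-i) * ((a+b-i).choose b : ℂ) * (v-u)^i * u^(a-i) * v^(b+1))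
    + (∑ j ∈ range (b+1), (-1:ℂ)^(a+1) * ((a+b-j).choose a : ℂ) * (v-u)^j * u^(a+1) * v^(b-j)) := by
  intro a
  induction a with
  | zero =>
    intro b u v
    have hg := geom_sum₂_mul (v-u) v (b+1)
    simp only [Nat.add_sub_cancel] at hg
    have h2 : ∑ j ∈ range (b+1), (-1:ℂ)^(0+1) * (((0+b-j).choose 0 : ℕ):ℂ) * (v-u)^j * u^(0+1) * v^(b-j)
        = -u * ∑ j ∈ range (b+1), (v-u)^j * v^(b-j) := by
      rw [Finset.mul_sum]
      refine Finset.sum_congr rfl fun j hj => ?_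
      simp only [Nat.choose_zero_right, Nat.cast_one, pow_one, zero_add]
      ring
    rw [h2, Finset.sum_range_one]
    simp only [Nat.sub_zero, Nat.choose_self, Nat.cast_one, pow_zero, zero_add]
    linear_combination -hg
  | succ a ih =>
    intro b
    induction b with
    | zero =>
      intro u v
      have hg := geom_sum₂_mul (v-u) (-u) (a+1+1)
      simp only [Nat.add_sub_cancel] at hg
      have h1 : ∑ i ∈ range (a+1+1), (-1:ℂ)^(a+1-i) * (((a+1+0-i).choose 0 : ℕ):ℂ) * (v-u)^i * u^(a+1-i) * v^(0+1)
          = v * ∑ i ∈ range (a+1+1), (v-u)^i * (-u)^(a+1-i) := by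
        rw [Finset.mul_sum]
        refine Finset.sum_congr rfl fun i hi => ?_
        rw [Nat.choose_zero_right, show (-u)^(a+1-i) = (-1:ℂ)^(a+1-i) * u^(a+1-i) by rw [← neg_one_mul, mul_pow]]
        push_cast
        ring
      rw [h1, Finset.sum_range_one]
      simp only [Nat.sub_zero, Nat.add_zero, Nat.choose_self, Nat.cast_one, pow_zero]
      have hv : (v - u) - (-u) = v := by ring
      rw [hv] at hg
      have hne : (-u)^(a+1+1) = (-1:ℂ)^(a+1+1) * u^(a+1+1) := by rw [← neg_one_mul, mul_pow]
      linear_combination -hg + hne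
    | succ b ihb =>
      intro u v
      have H1 := ihb u v
      have H2 := ih (b+1) u v
      -- first sums
      have hA : (∑ i ∈ range (a+1+1), (-1:ℂ)^(a+1-i) * ((a+1+(b+1)-i).choose (b+1) : ℂ) * (v-u)^i * u^(a+1-i) * v^(b+1+1))
          = v * (∑ i ∈ range (a+1+1), (-1:ℂ)^(a+1-i) * ((a+1+b-i).choose b : ℂ) * (v-u)^i * u^(a+1-i) * v^(b+1))
            - u * (∑ i ∈ range (a+1), (-1:ℂ)^(a-i) * ((a+(b+1)-i).choose (b+1) : ℂ) * (v-u)^i * u^(a-i) * v^(b+1+1)) := by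
        rw [Finset.mul_sum, Finset.mul_sum]
        have hext : (∑ i ∈ range (a+1+1), u * ((-1:ℂ)^(a-i) * ((a+(b+1)-i).choose (b+1) : ℂ) * (v-u)^i * u^(a-i) * v^(b+1+1)))
            = ∑ i ∈ range (a+1), u * ((-1:ℂ)^(a-i) * ((a+(b+1)-i).choose (b+1) : ℂ) * (v-u)^i * u^(a-i) * v^(b+1+1)) := by
          rw [Finset.sum_range_succ, show a+(b+1)-(a+1) = b from by omega,
            Nat.choose_eq_zero_of_lt (Nat.lt_succ_self b)]
          simp
        rw [← hext, ← Finset.sum_sub_distrib]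
        refine Finset.sum_congr rfl fun i hi => ?_
        have hi' : i < a + 1 + 1 := Finset.mem_range.mp hi
        rcases Nat.lt_succ_iff_lt_or_eq.mp hi' with h | rfl
        · have h' : i ≤ a := Nat.lt_succ_iff.mp h
          rw [show a+1+(b+1)-i = (a+1+b-i)+1 from by omega, Nat.choose_succ_succ,
            show a+(b+1)-i = a+1+b-i from by omega,
            show a+1-i = (a-i)+1 from by omega]
          push_cast
          ring
        · rw [Nat.sub_self, show a+1+(b+1)-(a+1) = b+1 from by omega,
            show a+1+b-(a+1) = b from by omega, show a+(b+1)-(a+1) = b from by omega,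
            show a-(a+1) = 0 from by omega, Nat.choose_self, Nat.choose_self,
            Nat.choose_succ_self]
          push_cast
          ring
      -- second sums
      have hB : (∑ j ∈ range (b+1+1), (-1:ℂ)^(a+1+1) * ((a+1+(b+1)-j).choose (a+1) : ℂ) * (v-u)^j * u^(a+1+1) * v^(b+1-j))
          = v * (∑ j ∈ range (b+1), (-1:ℂ)^(a+1+1) * ((a+1+b-j).choose (a+1) : ℂ) * (v-u)^j * u^(a+1+1) * v^(b-j))
            - u * (∑ j ∈ range (b+1+1), (-1:ℂ)^(a+1) * ((a+(b+1)-j).choose a : ℂ) * (v-u)^j * u^(a+1) * v^(b+1-j)) := by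
        rw [Finset.mul_sum, Finset.mul_sum]
        have hext : (∑ j ∈ range (b+1+1), v * ((-1:ℂ)^(a+1+1) * ((a+1+b-j).choose (a+1) : ℂ) * (v-u)^j * u^(a+1+1) * v^(b-j)))
            = ∑ j ∈ range (b+1), v * ((-1:ℂ)^(a+1+1) * ((a+1+b-j).choose (a+1) : ℂ) * (v-u)^j * u^(a+1+1) * v^(b-j)) := by
          rw [Finset.sum_range_succ, show a+1+b-(b+1) = a from by omega,
            Nat.choose_eq_zero_of_lt (Nat.lt_succ_self a)]
          simp
        rw [← hext, ← Finset.sum_sub_distrib]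
        refine Finset.sum_congr rfl fun j hj => ?_
        have hj' : j < b + 1 + 1 := Finset.mem_range.mp hj
        rcases Nat.lt_succ_iff_lt_or_eq.mp hj' with h | rfl
        · have h' : j ≤ b := Nat.lt_succ_iff.mp h
          rw [show a+1+(b+1)-j = (a+(b+1)-j)+1 from by omega, Nat.choose_succ_succ,
            show a+1+b-j = a+(b+1)-j from by omega,
            show b+1-j = (b-j)+1 from by omega]
          push_cast
          ring
        · rw [Nat.sub_self, show a+1+(b+1)-(b+1) = a+1 from by omega,
            show a+1+b-(b+1) = a from by omega, show a+(b+1)-(b+1) = a from by omega,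
            show b-(b+1) = 0 from by omega, Nat.choose_self, Nat.choose_self,
            Nat.choose_succ_self]
          push_cast
          ring
      linear_combination -hA - hB + v * H1 - u * H2

lemma cancel1 (S A B Cc E F : ℂ) (hA : A ≠ 0) (hB : B ≠ 0) (hC : Cc ≠ 0) (hE : E ≠ 0) (hF : F ≠ 0) :
    S * B⁻¹ * E⁻¹ = S * A * Cc * F / (A * B * (Cc * E * F)) := by
  field_simp

lemma cancel2 (S A B Cc E F : ℂ) (hA : A ≠ 0) (hB : B ≠ 0) (hC : Cc ≠ 0) (hE : E ≠ 0) (hF : F ≠ 0) :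
    S * B⁻¹ * E⁻¹ = S * A * Cc * F / (A * B * (Cc * (F * E))) := by
  field_simp

/-- Partial fraction decomposition of `(α − α′)^k/((z−α)^k (z−α′)^k)`:
for a positive integer `k` and distinct `α, α′ ∈ ℂ`, and `z ≠ α, α′`,
`(α − α′)^k / ((z − α)^k (z − α′)^k)
  = Σ_{m=1}^{k} (−1)^{m−k}·C(2k−m−1, k−1)·(α − α′)^{m−k}·(z − α)^{−m}
  + Σ_{n=1}^{k} (−1)^{k}·C(2k−n−1, k−1)·(α − α′)^{n−k}·(z − α′)^{−n}`. -/
theorem partial_fraction_decomposition (k : ℕ) (hk : 0 < k)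
    (α α' z : ℂ) (hαα' : α ≠ α') (hzα : z ≠ α) (hzα' : z ≠ α') :
    (α - α') ^ k / ((z - α) ^ k * (z - α') ^ k) =
      (∑ m ∈ Finset.Icc 1 k,
        (-1 : ℂ) ^ ((m : ℤ) - (k : ℤ)) *
          (Nat.choose (2 * k - m - 1) (k - 1) : ℂ) *
          (α - α') ^ ((m : ℤ) - (k : ℤ)) * (z - α) ^ (-(m : ℤ))) +
      (∑ n ∈ Finset.Icc 1 k,
        (-1 : ℂ) ^ (k : ℤ) *
          (Nat.choose (2 * k - n - 1) (k - 1) : ℂ) *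
          (α - α') ^ ((n : ℤ) - (k : ℤ)) * (z - α') ^ (-(n : ℤ))) := by
  obtain ⟨c, rfl⟩ : ∃ c, k = c + 1 := ⟨k - 1, by omega⟩
  have hu : z - α ≠ 0 := sub_ne_zero.mpr hzα
  have hv : z - α' ≠ 0 := sub_ne_zero.mpr hzα'
  have hd : α - α' = (z - α') - (z - α) := by ring
  have hd0 : (z - α') - (z - α) ≠ 0 := by rw [← hd]; exact sub_ne_zero.mpr hαα'
  rw [hd]
  rw [← Finset.Ico_add_one_right_eq_Icc, Finset.sum_Ico_eq_sum_range, Finset.sum_Ico_eq_sum_range]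
  simp only [Nat.add_sub_cancel]
  have hD : ((z - α') - (z - α))^c * ((z - α)^(c+1) * (z - α')^(c+1)) ≠ 0 :=
    mul_ne_zero (pow_ne_zero _ hd0) (mul_ne_zero (pow_ne_zero _ hu) (pow_ne_zero _ hv))
  have key := keyP c c (z - α) (z - α')
  have hS1 : (∑ i ∈ range (c+1),
        (-1 : ℂ) ^ (((1 + i : ℕ) : ℤ) - ((c + 1 : ℕ) : ℤ)) *
          (Nat.choose (2 * (c+1) - (1 + i) - 1) ((c+1) - 1) : ℂ) *
          ((z - α') - (z - α)) ^ (((1 + i : ℕ) : ℤ) - ((c + 1 : ℕ) : ℤ)) * (z - α) ^ (-((1 + i : ℕ) : ℤ)))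
      = (∑ i ∈ range (c+1), (-1:ℂ)^(c-i) * ((c+c-i).choose c : ℂ) * ((z - α') - (z - α))^i * (z - α)^(c-i) * (z - α')^(c+1))
        / (((z - α') - (z - α))^c * ((z - α)^(c+1) * (z - α')^(c+1))) := by
    rw [Finset.sum_div]
    refine Finset.sum_congr rfl fun i hi => ?_
    have hic : i ≤ c := Nat.lt_succ_iff.mp (Finset.mem_range.mp hi)
    rw [show 2*(c+1)-(1+i)-1 = c+c-i from by omega, show (c+1)-1 = c from by omega]
    rw [show (((1 + i : ℕ)) : ℤ) - ((c + 1 : ℕ) : ℤ) = -(((c - i : ℕ)) : ℤ) from by omega]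
    rw [zpow_neg, zpow_natCast, ← inv_pow, inv_neg, inv_one]
    rw [zpow_neg, zpow_natCast]
    rw [zpow_neg, zpow_natCast]
    rw [show ((z - α') - (z - α))^c = ((z - α') - (z - α))^i * ((z - α') - (z - α))^(c-i) from by
      rw [← pow_add]; congr 1; omega]
    rw [show (z - α)^(c+1) = (z - α)^(c-i) * (z - α)^(1+i) from by
      rw [← pow_add]; congr 1; omega]
    have h1 : ((z - α') - (z - α))^(c-i) ≠ 0 := pow_ne_zero _ hd0
    have h2 : (z - α)^(1+i) ≠ 0 := pow_ne_zero _ hu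
    have h3 : (z - α')^(c+1) ≠ 0 := pow_ne_zero _ hv
    have h4 : ((z - α') - (z - α))^i ≠ 0 := pow_ne_zero _ hd0
    have h5 : (z - α)^(c-i) ≠ 0 := pow_ne_zero _ hu
    exact cancel1 _ _ _ _ _ _ h4 h1 h5 h2 h3
  have hS2 : (∑ j ∈ range (c+1),
        (-1 : ℂ) ^ (((c + 1 : ℕ)) : ℤ) *
          (Nat.choose (2 * (c+1) - (1 + j) - 1) ((c+1) - 1) : ℂ) *
          ((z - α') - (z - α)) ^ (((1 + j : ℕ) : ℤ) - ((c + 1 : ℕ) : ℤ)) * (z - α') ^ (-((1 + j : ℕ) : ℤ)))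
      = (∑ j ∈ range (c+1), (-1:ℂ)^(c+1) * ((c+c-j).choose c : ℂ) * ((z - α') - (z - α))^j * (z - α)^(c+1) * (z - α')^(c-j))
        / (((z - α') - (z - α))^c * ((z - α)^(c+1) * (z - α')^(c+1))) := by
    rw [Finset.sum_div]
    refine Finset.sum_congr rfl fun j hj => ?_
    have hjc : j ≤ c := Nat.lt_succ_iff.mp (Finset.mem_range.mp hj)
    rw [show 2*(c+1)-(1+j)-1 = c+c-j from by omega, show (c+1)-1 = c from by omega]
    rw [show (((1 + j : ℕ)) : ℤ) - ((c + 1 : ℕ) : ℤ) = -(((c - j : ℕ)) : ℤ) from by omega]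
    rw [zpow_natCast]
    rw [zpow_neg, zpow_natCast]
    rw [zpow_neg, zpow_natCast]
    rw [show ((z - α') - (z - α))^c = ((z - α') - (z - α))^j * ((z - α') - (z - α))^(c-j) from by
      rw [← pow_add]; congr 1; omega]
    rw [show (z - α')^(c+1) = (z - α')^(c-j) * (z - α')^(1+j) from by
      rw [← pow_add]; congr 1; omega]
    have h1 : ((z - α') - (z - α))^(c-j) ≠ 0 := pow_ne_zero _ hd0
    have h2 : (z - α')^(1+j) ≠ 0 := pow_ne_zero _ hv
    have h3 : (z - α)^(c+1) ≠ 0 := pow_ne_zero _ hu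
    have h4 : ((z - α') - (z - α))^j ≠ 0 := pow_ne_zero _ hd0
    have h5 : (z - α')^(c-j) ≠ 0 := pow_ne_zero _ hv
    exact cancel2 _ _ _ _ _ _ h4 h1 h3 h2 h5
  push_cast at hS1 hS2 ⊢
  rw [hS1, hS2, ← add_div, ← key,
    div_eq_div_iff (mul_ne_zero (pow_ne_zero _ hu) (pow_ne_zero _ hv)) hD]
  ring
end

section
/- Let λ > 0 and β > 0 be real numbers and let (a_n)_{n≥1} be complex numbers with |a_n| ≤ C·n^β for all n and some constant C > 0. Then for every s ∈ ℂ with Re(s) > β + 1: the series F(iy) = Σ_{n=1}^∞ a_n e^{−2πny/λ} converges absolutely for every y > 0, the integral ∫₀^∞ F(iy) y^{s−1} dy converges absolutely, the Dirichlet series φ(s) = Σ_{n=1}^∞ a_n n^{−s} converges absolutely, and ∫₀^∞ F(iy) y^{s−1} dy = (2π/λ)^{−s} · Γ(s) · φ(s). -/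
open MeasureTheory

open Real Complex Set Filter Topology in
private lemma mtds_aux
    (lam β C : ℝ) (hlam : 0 < lam) (hβ : 0 < β) (hC : 0 < C)
    (a : ℕ → ℂ) (ha : ∀ n : ℕ, 1 ≤ n → ‖a n‖ ≤ C * (n : ℝ) ^ β)
    (s : ℂ) (hs : β + 1 < s.re) :
    (∀ y : ℝ, 0 < y → Summable (fun n : ℕ =>
      ‖a (n + 1) * Complex.exp (-((2 * Real.pi * ((n : ℝ) + 1) * y / lam : ℝ) : ℂ))‖)) ∧
    Summable (fun n : ℕ => ‖a (n + 1)‖ / (2 * Real.pi * ((n : ℝ) + 1) / lam) ^ s.re) := by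
  have hπ : 0 < Real.pi := Real.pi_pos
  have hσ0 : (0:ℝ) < s.re := by linarith
  have hnorm : ∀ n : ℕ, ∀ y : ℝ,
      ‖a (n + 1) * Complex.exp (-((2 * Real.pi * ((n : ℝ) + 1) * y / lam : ℝ) : ℂ))‖
        = ‖a (n + 1)‖ * Real.exp (-(2 * Real.pi * ((n : ℝ) + 1) * y / lam)) := by
    intro n y
    rw [norm_mul, Complex.norm_exp]
    simp
  have hale : ∀ n : ℕ, ‖a (n + 1)‖ ≤ C * ((n : ℝ) + 1) ^ β := by
    intro n
    have := ha (n + 1) (by omega)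
    push_cast at this
    exact this
  constructor
  · intro y hy
    set r : ℝ := Real.exp (-(2 * Real.pi * y / lam)) with hr_def
    have hr0 : 0 ≤ r := Real.exp_nonneg _
    have hr1 : r < 1 := by
      rw [hr_def, Real.exp_lt_one_iff]
      have : 0 < 2 * Real.pi * y / lam := by positivity
      linarith
    set k : ℕ := ⌈β⌉₊ with hk_def
    have hmaj : Summable (fun n : ℕ => C * (((n : ℝ) + 1) ^ k * r ^ (n + 1))) := by
      have h1 : Summable (fun n : ℕ => (n : ℝ) ^ k * r ^ n) :=
        summable_pow_mul_geometric_of_norm_lt_one k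
          (by rwa [Real.norm_eq_abs, _root_.abs_of_nonneg hr0])
      have h2 := h1.comp_injective (add_left_injective 1)
      refine ((h2.congr ?_).mul_left C)
      intro n
      simp [Function.comp]
    apply Summable.of_nonneg_of_le (fun n => norm_nonneg _) _ hmaj
    intro n
    rw [hnorm]
    have hexp : Real.exp (-(2 * Real.pi * ((n : ℝ) + 1) * y / lam)) = r ^ (n + 1) := by
      rw [hr_def, ← Real.exp_nat_mul]
      congr 1
      push_cast
      ring
    rw [hexp]
    have h3 : ((n : ℝ) + 1) ^ β ≤ ((n : ℝ) + 1) ^ (k : ℕ) := by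
      rw [← Real.rpow_natCast (((n : ℝ) + 1)) k]
      apply Real.rpow_le_rpow_of_exponent_le
      · have := n.cast_nonneg (α := ℝ); linarith
      · exact_mod_cast Nat.le_ceil β
    have h4 : ‖a (n + 1)‖ ≤ C * ((n : ℝ) + 1) ^ k :=
      (hale n).trans (by nlinarith [pow_nonneg (by positivity : (0:ℝ) ≤ (n:ℝ)+1) k])
    calc ‖a (n + 1)‖ * r ^ (n + 1) ≤ (C * ((n : ℝ) + 1) ^ k) * r ^ (n + 1) := by
          apply mul_le_mul_of_nonneg_right h4 (pow_nonneg hr0 _)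
      _ = C * (((n : ℝ) + 1) ^ k * r ^ (n + 1)) := by ring
  · have hps : Summable (fun n : ℕ => ((n : ℝ) + 1) ^ (β - s.re)) := by
      have h1 : Summable (fun n : ℕ => (n : ℝ) ^ (β - s.re)) :=
        Real.summable_nat_rpow.mpr (by linarith)
      refine (h1.comp_injective (add_left_injective 1)).congr ?_
      intro n
      simp [Function.comp]
    apply Summable.of_nonneg_of_le (fun n => by positivity) _
      (hps.mul_left (C * (2 * Real.pi / lam) ^ (-s.re)))
    intro n
    have hn1 : (0:ℝ) < (n : ℝ) + 1 := by positivity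
    have hpn : 2 * Real.pi * ((n : ℝ) + 1) / lam = (2 * Real.pi / lam) * ((n : ℝ) + 1) := by
      ring
    have hb : (0:ℝ) < 2 * Real.pi / lam := by positivity
    rw [div_le_iff₀ (by positivity), hpn, Real.mul_rpow hb.le hn1.le]
    calc ‖a (n + 1)‖ ≤ C * ((n : ℝ) + 1) ^ β := hale n
      _ = C * (2 * Real.pi / lam) ^ (-s.re) * ((n : ℝ) + 1) ^ (β - s.re) *
            ((2 * Real.pi / lam) ^ s.re * ((n : ℝ) + 1) ^ s.re) := by
          rw [Real.rpow_neg hb.le, Real.rpow_sub hn1]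
          field_simp

open Real Complex Set Filter Topology in
/-- Hecke's correspondence (Mellin transform step): if `|a_n| ≤ C n^β` and
`Re s > β + 1`, then `F(iy) = Σ_{n≥1} a_n e^{−2πny/λ}` converges absolutely
for all `y > 0`, the Mellin transform `∫₀^∞ F(iy) y^{s−1} dy` converges
absolutely, the Dirichlet series `φ(s) = Σ_{n≥1} a_n n^{−s}` converges
absolutely, and `∫₀^∞ F(iy) y^{s−1} dy = (2π/λ)^{−s} Γ(s) φ(s)`. -/
theorem mellin_transform_dirichlet_series
    (lam β C : ℝ) (hlam : 0 < lam) (hβ : 0 < β) (hC : 0 < C)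
    (a : ℕ → ℂ) (ha : ∀ n : ℕ, 1 ≤ n → ‖a n‖ ≤ C * (n : ℝ) ^ β)
    (F : ℝ → ℂ)
    (hF : ∀ y : ℝ, F y = ∑' n : ℕ, a (n + 1) *
      Complex.exp (-((2 * Real.pi * ((n : ℝ) + 1) * y / lam : ℝ) : ℂ)))
    (s : ℂ) (hs : β + 1 < s.re) :
    (∀ y : ℝ, 0 < y → Summable (fun n : ℕ =>
      ‖a (n + 1) * Complex.exp (-((2 * Real.pi * ((n : ℝ) + 1) * y / lam : ℝ) : ℂ))‖)) ∧
    IntegrableOn (fun y : ℝ => F y * (y : ℂ) ^ (s - 1)) (Set.Ioi 0) ∧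
    Summable (fun n : ℕ => ‖a (n + 1) * ((n : ℂ) + 1) ^ (-s)‖) ∧
    ∫ y in Set.Ioi (0 : ℝ), F y * (y : ℂ) ^ (s - 1) =
      ((2 * Real.pi / lam : ℝ) : ℂ) ^ (-s) * Complex.Gamma s *
        ∑' n : ℕ, a (n + 1) * ((n : ℂ) + 1) ^ (-s) := by
  obtain ⟨part1, h_sum⟩ := mtds_aux lam β C hlam hβ hC a ha s hs
  have hπ : 0 < Real.pi := Real.pi_pos
  have hσ0 : (0:ℝ) < s.re := by linarith
  set p : ℕ → ℝ := fun n => 2 * Real.pi * ((n : ℝ) + 1) / lam with hp_def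
  have hppos : ∀ n, 0 < p n := fun n => by rw [hp_def]; positivity
  -- the summands with complex exponentials agree with those with real exponentials
  have hterm_eq : ∀ (n : ℕ) (t : ℝ),
      a (n + 1) * ((Real.exp (-(p n) * t) : ℝ) : ℂ)
        = a (n + 1) * Complex.exp (-((2 * Real.pi * ((n : ℝ) + 1) * t / lam : ℝ) : ℂ)) := by
    intro n t
    rw [Complex.ofReal_exp]
    congr 1
    push_cast [hp_def]
    ring
  -- HasSum hypothesis for `hasSum_mellin`
  have hF' : ∀ t ∈ Ioi (0:ℝ), HasSum (fun n : ℕ => a (n + 1) * rexp (-(p n) * t)) (F t) := by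
    intro t ht
    rw [hF t]
    have hsumm : Summable (fun n : ℕ =>
        a (n + 1) * Complex.exp (-((2 * Real.pi * ((n : ℝ) + 1) * t / lam : ℝ) : ℂ))) :=
      Summable.of_norm (part1 t ht)
    have : (fun n : ℕ => a (n + 1) * ((rexp (-(p n) * t) : ℝ) : ℂ))
        = fun n : ℕ => a (n + 1) * Complex.exp (-((2 * Real.pi * ((n : ℝ) + 1) * t / lam : ℝ) : ℂ)) :=
      funext fun n => hterm_eq n t
    rw [this]
    exact hsumm.hasSum
  have hp' : ∀ n : ℕ, a (n + 1) = 0 ∨ 0 < p n := fun n => Or.inr (hppos n)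
  have hMel : HasSum (fun n : ℕ => Complex.Gamma s * a (n + 1) / (p n : ℂ) ^ s) (mellin F s) :=
    hasSum_mellin hp' hσ0 hF' h_sum
  -- the terms of the Mellin integrand
  set f : ℕ → ℝ → ℂ := fun n t => a (n + 1) *
    Complex.exp (-((2 * Real.pi * ((n : ℝ) + 1) * t / lam : ℝ) : ℂ)) * (t : ℂ) ^ (s - 1)
    with hf_def
  have hf_cont : ∀ n, ContinuousOn (f n) (Ioi (0:ℝ)) := by
    intro n
    apply ContinuousOn.mul
    · apply Continuous.continuousOn
      fun_prop
    · intro t ht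
      exact (Complex.continuousAt_ofReal_cpow_const t (s - 1)
        (Or.inr (ne_of_gt ht))).continuousWithinAt
  have hf_meas : ∀ n, AEStronglyMeasurable (f n) (volume.restrict (Ioi (0:ℝ))) :=
    fun n => (hf_cont n).aestronglyMeasurable measurableSet_Ioi
  have hf_int : ∀ n, IntegrableOn (f n) (Ioi (0:ℝ)) := by
    intro n
    have h0 := Complex.GammaIntegral_convergent hσ0
    rw [← mul_zero (p n), ← integrableOn_Ioi_comp_mul_left_iff _ _ (hppos n)] at h0
    have h1 : IntegrableOn (fun t : ℝ => (t : ℂ) ^ (s - 1) * ((rexp (-(p n) * t) : ℝ) : ℂ))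
        (Ioi (0:ℝ)) := by
      refine IntegrableOn.congr_fun (h0.const_mul (1 / (p n : ℂ) ^ (s - 1)))
        (fun t (ht : 0 < t) => ?_) measurableSet_Ioi
      simp_rw [mul_comm (↑(rexp _) : ℂ), ← mul_assoc, neg_mul, ofReal_mul]
      rw [mul_cpow_ofReal_nonneg (hppos n).le ht.le, ← mul_assoc, one_div, inv_mul_cancel₀,
        one_mul]
      rw [Ne, cpow_eq_zero_iff, not_and_or]
      exact Or.inl (ofReal_ne_zero.mpr (hppos n).ne')
    refine IntegrableOn.congr_fun (h1.const_mul (a (n + 1))) (fun t (ht : 0 < t) => ?_)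
      measurableSet_Ioi
    rw [hf_def]
    dsimp only
    rw [← hterm_eq n t]
    ring
  -- value of the integral of the norm of each term
  have hnormint : ∀ n, ∫ t in Ioi (0:ℝ), ‖f n t‖
      = Real.Gamma s.re * (‖a (n + 1)‖ / (p n) ^ s.re) := by
    intro n
    have hint : ∫ t in Ioi (0:ℝ), ‖f n t‖
        = ∫ t in Ioi (0:ℝ), ‖a (n + 1)‖ * (t ^ (s.re - 1) * rexp (-(p n * t))) := by
      refine setIntegral_congr_fun measurableSet_Ioi (fun t (ht : 0 < t) => ?_)
      rw [hf_def]
      dsimp only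
      rw [norm_mul, norm_mul, Complex.norm_exp,
        Complex.norm_cpow_eq_rpow_re_of_pos ht,
        Complex.sub_re, Complex.one_re]
      have : (-((2 * Real.pi * ((n : ℝ) + 1) * t / lam : ℝ) : ℂ)).re = -(p n * t) := by
        rw [hp_def]
        simp
        ring
      rw [this]
      ring
    rw [hint, integral_const_mul, Real.integral_rpow_mul_exp_neg_mul_Ioi hσ0 (hppos n),
      one_div, Real.inv_rpow (hppos n).le]
    rw [div_eq_mul_inv]
    ring
  have hsumnorm : Summable (fun n => ∫ t in Ioi (0:ℝ), ‖f n t‖) :=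
    (h_sum.mul_left (Real.Gamma s.re)).congr (fun n => (hnormint n).symm)
  -- integrability of the sum
  have hFtsum : ∀ t : ℝ, F t * (t : ℂ) ^ (s - 1) = ∑' n, f n t := by
    intro t
    rw [hF t, ← tsum_mul_right]
  have hsummf : ∀ t : ℝ, 0 < t → Summable (fun n => f n t) := by
    intro t ht
    apply Summable.of_norm
    refine ((part1 t ht).mul_right ‖(t : ℂ) ^ (s - 1)‖).congr (fun n => ?_)
    rw [hf_def]
    dsimp only
    rw [norm_mul (a (n+1) * _)]
  have hmeas_tsum : AEStronglyMeasurable (fun t => ∑' n, f n t)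
      (volume.restrict (Ioi (0:ℝ))) := by
    apply aestronglyMeasurable_of_tendsto_ae atTop
      (fun N : ℕ => Finset.aestronglyMeasurable_sum (Finset.range N) (fun n _ => hf_meas n))
    filter_upwards [ae_restrict_mem measurableSet_Ioi] with t ht
    simpa only [Finset.sum_apply] using (hsummf t ht).hasSum.tendsto_sum_nat
  have hfin : HasFiniteIntegral (fun t => ∑' n, f n t) (volume.restrict (Ioi (0:ℝ))) := by
    rw [hasFiniteIntegral_def]
    calc ∫⁻ t in Ioi (0:ℝ), (‖∑' n, f n t‖₊ : ENNReal)
        ≤ ∫⁻ t in Ioi (0:ℝ), ∑' n, (‖f n t‖₊ : ENNReal) := by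
          apply lintegral_mono
          intro t
          by_cases h : Summable fun n => ‖f n t‖
          · calc (‖∑' n, f n t‖₊ : ENNReal) = ENNReal.ofReal ‖∑' n, f n t‖ :=
                  (ofReal_norm (∑' n, f n t)).symm
              _ ≤ ENNReal.ofReal (∑' n, ‖f n t‖) :=
                  ENNReal.ofReal_le_ofReal (norm_tsum_le_tsum_norm h)
              _ = ∑' n, ENNReal.ofReal ‖f n t‖ :=
                  ENNReal.ofReal_tsum_of_nonneg (fun _ => norm_nonneg _) h
              _ = ∑' n, (‖f n t‖₊ : ENNReal) :=
                  tsum_congr fun n => ofReal_norm (f n t)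
          · have htop : ∑' n, (‖f n t‖₊ : ENNReal) = ⊤ := by
              by_contra htop
              have h1 := ENNReal.tsum_coe_ne_top_iff_summable.mp htop
              have h2 := NNReal.summable_coe.mpr h1
              exact h (by simpa using h2)
            simp [htop]
      _ = ∑' n, ∫⁻ t in Ioi (0:ℝ), (‖f n t‖₊ : ENNReal) :=
          lintegral_tsum (fun n => (hf_meas n).enorm)
      _ < ⊤ := by
          have heach : ∀ n, ∫⁻ t in Ioi (0:ℝ), (‖f n t‖₊ : ENNReal)
              = ENNReal.ofReal (∫ t in Ioi (0:ℝ), ‖f n t‖) := by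
            intro n
            have hi : Integrable (fun t => (‖f n t‖₊ : ℝ))
                (volume.restrict (Ioi (0:ℝ))) := by
              simpa [coe_nnnorm] using (hf_int n).norm
            rw [lintegral_coe_eq_integral _ hi]
            simp [coe_nnnorm]
          simp_rw [heach]
          rw [← ENNReal.ofReal_tsum_of_nonneg
            (fun n => integral_nonneg (fun t => norm_nonneg _)) hsumnorm]
          exact ENNReal.ofReal_lt_top
  have hint_tsum : Integrable (fun t => ∑' n, f n t) (volume.restrict (Ioi (0:ℝ))) :=
    ⟨hmeas_tsum, hfin⟩
  have part2 : IntegrableOn (fun y : ℝ => F y * (y : ℂ) ^ (s - 1)) (Ioi 0) := by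
    refine hint_tsum.congr ?_
    filter_upwards [ae_restrict_mem measurableSet_Ioi] with t _
    exact (hFtsum t).symm
  -- part 3
  have hnorm3 : ∀ n : ℕ, ‖a (n + 1) * ((n : ℂ) + 1) ^ (-s)‖
      = ‖a (n + 1)‖ / (((n : ℝ) + 1)) ^ s.re := by
    intro n
    have hcast : ((n : ℂ) + 1) = (((n : ℝ) + 1 : ℝ) : ℂ) := by push_cast; ring
    have hx : ‖((((n : ℝ) + 1 : ℝ)) : ℂ) ^ (-s)‖ = (((n : ℝ) + 1)) ^ (-s.re) := by
      rw [Complex.norm_cpow_eq_rpow_re_of_pos (by positivity),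
        Complex.neg_re]
    rw [norm_mul, hcast, hx, Real.rpow_neg (by positivity), div_eq_mul_inv]
  have part3 : Summable (fun n : ℕ => ‖a (n + 1) * ((n : ℂ) + 1) ^ (-s)‖) := by
    refine Summable.of_nonneg_of_le (fun n => norm_nonneg _) (fun n => ?_)
      (h_sum.mul_left ((2 * Real.pi / lam) ^ s.re))
    rw [hnorm3 n]
    have hb : (0:ℝ) < 2 * Real.pi / lam := by positivity
    have hn1 : (0:ℝ) < (n : ℝ) + 1 := by positivity
    have hpn : 2 * Real.pi * ((n : ℝ) + 1) / lam = (2 * Real.pi / lam) * ((n : ℝ) + 1) := by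
      ring
    have hbσ : (0:ℝ) < (2 * Real.pi / lam) ^ s.re := Real.rpow_pos_of_pos hb _
    have hnσ : (0:ℝ) < ((n : ℝ) + 1) ^ s.re := Real.rpow_pos_of_pos hn1 _
    rw [hpn, Real.mul_rpow hb.le hn1.le]
    apply le_of_eq
    field_simp
  -- part 4
  have hlhs : ∫ y in Ioi (0:ℝ), F y * (y : ℂ) ^ (s - 1) = mellin F s := by
    rw [mellin]
    refine setIntegral_congr_fun measurableSet_Ioi (fun t _ => ?_)
    rw [smul_eq_mul, mul_comm]
  have htsum_eq : ∑' n : ℕ, Complex.Gamma s * a (n + 1) / (p n : ℂ) ^ s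
      = ((2 * Real.pi / lam : ℝ) : ℂ) ^ (-s) * Complex.Gamma s *
        ∑' n : ℕ, a (n + 1) * ((n : ℂ) + 1) ^ (-s) := by
    rw [← tsum_mul_left]
    congr 1
    funext n
    have hpc : ((p n : ℝ) : ℂ) = ((2 * Real.pi / lam : ℝ) : ℂ) * (((n : ℝ) + 1 : ℝ) : ℂ) := by
      rw [hp_def]
      push_cast
      ring
    have hb : (0:ℝ) ≤ 2 * Real.pi / lam := by positivity
    have hn1 : (0:ℝ) ≤ (n : ℝ) + 1 := by positivity
    have hcast : ((n : ℂ) + 1) = (((n : ℝ) + 1 : ℝ) : ℂ) := by push_cast; ring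
    rw [hpc, mul_cpow_ofReal_nonneg hb hn1, hcast]
    simp only [Complex.cpow_neg]
    field_simp
  refine ⟨part1, part2, part3, ?_⟩
  rw [hlhs, ← hMel.tsum_eq, htsum_eq]
end

section
/- Let k be an odd positive integer, N a positive integer, c_1, …, c_N complex constants, and for each j let α_j, β_j be real numbers with α_j > 0 > β_j. Define q*(z) = Σ_{j=1}^N c_j (α_j − β_j)^k (z − α_j)^{−k} (z − β_j)^{−k}, and assume that z^{−2k} q*(−1/z) + q*(z) = 0 for all z in the upper half-plane. Then the integral R(s) = −∫₀^∞ q*(iy) y^{s−1} dy converges absolutely for every s ∈ ℂ with 0 < Re(s) < 2k, and the first relation R(2k − s) = R(s) holds for all such s. -/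
open MeasureTheory

/-- First relation for the remainder term: let `k` be an odd positive
integer and `q*(z) = Σ_j c_j (α_j − β_j)^k (z−α_j)^{−k}(z−β_j)^{−k}` with
`α_j > 0 > β_j`, satisfying the period relation
`z^{−2k} q*(−1/z) + q*(z) = 0` on the upper half-plane. Then
`R(s) = −∫₀^∞ q*(iy) y^{s−1} dy` converges absolutely for `0 < Re s < 2k`
and satisfies `R(2k − s) = R(s)`. -/
theorem remainder_first_relation (k : ℕ) (hk : Odd k) (hkpos : 0 < k)
    (N : ℕ) (hN : 0 < N) (c : Fin N → ℂ) (α β : Fin N → ℝ)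
    (hαβ : ∀ j, β j < 0 ∧ 0 < α j)
    (q : ℂ → ℂ)
    (hq : ∀ z : ℂ, q z = ∑ j, c j * ((α j : ℂ) - (β j : ℂ)) ^ k *
      (z - (α j : ℂ)) ^ (-(k : ℤ)) * (z - (β j : ℂ)) ^ (-(k : ℤ)))
    (hrel : ∀ z : ℂ, 0 < z.im →
      z ^ (-(2 * (k : ℤ))) * q (-1 / z) + q z = 0)
    (R : ℂ → ℂ)
    (hR : ∀ s : ℂ, R s =
      -∫ y in Set.Ioi (0 : ℝ), q (Complex.I * (y : ℂ)) * (y : ℂ) ^ (s - 1)) :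
    ∀ s : ℂ, 0 < s.re → s.re < 2 * k →
      IntegrableOn (fun y : ℝ =>
        q (Complex.I * (y : ℂ)) * (y : ℂ) ^ (s - 1)) (Set.Ioi 0) ∧
      R (2 * (k : ℂ) - s) = R s := by
  intro s hs0 hs2k
  set F : ℝ → ℂ := fun y => q (Complex.I * (y : ℂ)) with hF
  -- nonvanishing of denominators
  have hden : ∀ (y : ℝ) (a : ℝ), a ≠ 0 → Complex.I * (y : ℂ) - (a : ℂ) ≠ 0 := by
    intro y a ha h
    apply ha
    have := congrArg Complex.re h
    simpa using this.symm
  -- continuity of F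
  have hFeq : F = fun y : ℝ => ∑ j, c j * ((α j : ℂ) - (β j : ℂ)) ^ k *
      (Complex.I * (y : ℂ) - (α j : ℂ)) ^ (-(k : ℤ)) *
      (Complex.I * (y : ℂ) - (β j : ℂ)) ^ (-(k : ℤ)) :=
    funext fun y => hq _
  have hcont : Continuous F := by
    rw [hFeq]
    refine continuous_finset_sum _ fun j _ => ?_
    have h1 : Continuous fun y : ℝ => Complex.I * (y : ℂ) - (α j : ℂ) :=
      (continuous_const.mul Complex.continuous_ofReal).sub continuous_const
    have h2 : Continuous fun y : ℝ => Complex.I * (y : ℂ) - (β j : ℂ) :=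
      (continuous_const.mul Complex.continuous_ofReal).sub continuous_const
    exact ((continuous_const.mul
      (h1.zpow₀ _ fun y => Or.inl (hden y _ (hαβ j).2.ne'))).mul
      (h2.zpow₀ _ fun y => Or.inl (hden y _ (hαβ j).1.ne)))
  -- bound at infinity
  have hnorm_le : ∀ (y : ℝ) (a : ℝ), 0 < y →
      ‖(Complex.I * (y : ℂ) - (a : ℂ)) ^ (-(k : ℤ))‖ ≤ (y ^ k)⁻¹ := by
    intro y a hy
    rw [norm_zpow, zpow_neg, zpow_natCast]
    have him : y ≤ ‖Complex.I * (y : ℂ) - (a : ℂ)‖ := by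
      have := Complex.abs_im_le_norm (Complex.I * (y : ℂ) - (a : ℂ))
      simp only [Complex.sub_im, Complex.mul_im, Complex.I_re, Complex.I_im,
        Complex.ofReal_re, Complex.ofReal_im] at this
      calc y ≤ |y| := le_abs_self y
        _ ≤ _ := by simpa using this
    exact inv_anti₀ (pow_pos hy k) (pow_le_pow_left₀ hy.le him k)
  have htop : F =O[Filter.atTop] (fun y : ℝ => y ^ (-(2 * k : ℝ))) := by
    refine Asymptotics.IsBigO.of_bound
      (∑ j, ‖c j‖ * ‖((α j : ℂ) - (β j : ℂ)) ^ k‖) ?_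
    filter_upwards [Filter.eventually_ge_atTop 1] with y hy
    have hy0 : (0 : ℝ) < y := lt_of_lt_of_le one_pos hy
    have hrp : ‖y ^ (-(2 * k : ℝ))‖ = (y ^ (2 * k))⁻¹ := by
      rw [Real.norm_of_nonneg (Real.rpow_nonneg hy0.le _), Real.rpow_neg hy0.le,
        ← Real.rpow_natCast y (2 * k)]
      norm_num
    rw [hrp, Finset.sum_mul]
    rw [hFeq]
    refine (norm_sum_le _ _).trans (Finset.sum_le_sum fun j _ => ?_)
    rw [norm_mul, norm_mul]
    have e1 := hnorm_le y (α j) hy0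
    have e2 := hnorm_le y (β j) hy0
    calc ‖c j * ((α j : ℂ) - (β j : ℂ)) ^ k‖ *
          ‖(Complex.I * (y : ℂ) - (α j : ℂ)) ^ (-(k : ℤ))‖ *
          ‖(Complex.I * (y : ℂ) - (β j : ℂ)) ^ (-(k : ℤ))‖
        ≤ ‖c j * ((α j : ℂ) - (β j : ℂ)) ^ k‖ * (y ^ k)⁻¹ * (y ^ k)⁻¹ := by
          gcongr <;> positivity
      _ = ‖c j‖ * ‖((α j : ℂ) - (β j : ℂ)) ^ k‖ * (y ^ (2 * k))⁻¹ := by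
          rw [norm_mul, two_mul, pow_add, mul_inv]
          ring
  -- bound at zero
  have hzero : F =O[nhdsWithin 0 (Set.Ioi 0)] (fun y : ℝ => y ^ (-(0 : ℝ))) := by
    have h1 : F =O[nhdsWithin 0 (Set.Ioi 0)] (fun _ : ℝ => (1 : ℝ)) :=
      (Asymptotics.isBigO_const_of_tendsto (hcont.tendsto 0) one_ne_zero).mono
        nhdsWithin_le_nhds
    simpa [neg_zero, Real.rpow_zero] using h1
  have hconv : MellinConvergent F s :=
    mellinConvergent_of_isBigO_rpow
      (hcont.locallyIntegrable.locallyIntegrableOn _)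
      htop (by exact_mod_cast hs2k) hzero hs0
  -- integrability
  have hint : IntegrableOn (fun y : ℝ =>
      q (Complex.I * (y : ℂ)) * (y : ℂ) ^ (s - 1)) (Set.Ioi 0) := by
    refine hconv.congr_fun (fun t _ => ?_) measurableSet_Ioi
    simp only [smul_eq_mul]
    ring
  refine ⟨hint, ?_⟩
  -- functional equation for F
  have key : ∀ y : ℝ, 0 < y →
      F y = ((y : ℂ) ^ (((-(2 * (k : ℤ))) : ℤ) : ℂ)) • F y⁻¹ := by
    intro y hy
    have hy' : (y : ℂ) ≠ 0 := Complex.ofReal_ne_zero.mpr hy.ne'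
    have hIy : Complex.I * (y : ℂ) ≠ 0 := mul_ne_zero Complex.I_ne_zero hy'
    have h := hrel (Complex.I * (y : ℂ)) (by simp [hy])
    have h1 : -1 / (Complex.I * (y : ℂ)) = Complex.I * ((y⁻¹ : ℝ) : ℂ) := by
      push_cast
      rw [div_eq_iff hIy]
      field_simp
      rw [Complex.I_sq]
    have h2 : (Complex.I * (y : ℂ)) ^ (-(2 * (k : ℤ))) =
        -((y : ℂ) ^ (-(2 * (k : ℤ)))) := by
      have hI : Complex.I ^ (-(2 * (k : ℤ))) = -1 := by
        rw [zpow_neg, zpow_mul, zpow_two, Complex.I_mul_I, zpow_natCast,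
          hk.neg_one_pow]
        norm_num
      rw [mul_zpow, hI]
      ring
    rw [h1, h2] at h
    have : F y = (y : ℂ) ^ (-(2 * (k : ℤ))) * F y⁻¹ := by
      have hFy : F y = q (Complex.I * (y : ℂ)) := rfl
      have hFyi : F y⁻¹ = q (Complex.I * ((y⁻¹ : ℝ) : ℂ)) := rfl
      rw [hFy, hFyi]
      linear_combination h
    rw [this, Complex.cpow_intCast, smul_eq_mul]
  -- Mellin symmetry
  have hmel : mellin F s = mellin F (2 * (k : ℂ) - s) := by
    have step1 : mellin F s =
        mellin (fun t : ℝ => ((t : ℂ) ^ (((-(2 * (k : ℤ))) : ℤ) : ℂ)) •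
          (fun u : ℝ => F u⁻¹) t) s := by
      unfold mellin
      refine setIntegral_congr_fun measurableSet_Ioi fun t ht => ?_
      rw [key t ht]
    rw [step1, mellin_cpow_smul, mellin_comp_inv]
    congr 1
    push_cast
    ring
  have hRm : ∀ w : ℂ, R w = -mellin F w := by
    intro w
    rw [hR w]
    congr 1
    unfold mellin
    refine setIntegral_congr_fun measurableSet_Ioi fun t _ => ?_
    simp only [smul_eq_mul]
    ring
  rw [hRm, hRm, ← hmel]
end

section
/- Let p ≥ 3 be an integer, λ = 2·cos(π/p), k an odd positive integer, and let u(x) = 1/(λ − x) denote the Möbius action of U^{−1} where U = ST = [[λ, −1],[1, 0]] (so u has order p as a Möbius transformation). Let L be a positive integer, c_1, …, c_L complex constants, and for each ℓ and each j with 2 ≤ j ≤ p let P_{ℓ,j} be a finite set of pairs (a, b) of distinct real numbers such that for every integer r the iterate pairs (u^r(a), u^r(b)) are defined (no division by zero is encountered) and consist of distinct nonzero reals. For 0 ≤ m ≤ p − 1 define R_m(s) = −Σ_{ℓ=1}^{L} c_ℓ Σ_{j=2}^{p} Σ_{(a,b) ∈ P_{ℓ,j}} [ R(s; u^m(a), u^m(b))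 − R(s; u^{m−(j−1)}(a), u^{m−(j−1)}(b)) ], so that R_0 = R is the remainder term and R_m = ρ^m(R) under the identification ρ(R(s;a,b)) = −R(2k−s; a−λ, b−λ) = R(s; u(a), u(b)). Then for every s with 0 < Re(s) < 2k, the second relation holds: R_0(s) + R_1(s) + ⋯ + R_{p−1}(s) = 0. -/
open MeasureTheory

/-- `R(s; a, b) = (a−b)^k ∫₀^∞ y^{s−1}(iy−a)^{−k}(iy−b)^{−k} dy`. -/
noncomputable def Rterm (k : ℕ) (s : ℂ) (a b : ℝ) : ℂ :=
  ((a : ℂ) - (b : ℂ)) ^ k * ∫ y in Set.Ioi (0 : ℝ),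
    (y : ℂ) ^ (s - 1) * (Complex.I * (y : ℂ) - (a : ℂ)) ^ (-(k : ℤ)) *
      (Complex.I * (y : ℂ) - (b : ℂ)) ^ (-(k : ℤ))

/-- Integer iterates of the Möbius map `u(x) = 1/(λ − x)` (the action of
`U⁻¹`, where `U = ST = [[λ,−1],[1,0]]`); negative iterates use the inverse
map `x ↦ λ − 1/x`. -/
noncomputable def uIter (lam : ℝ) (r : ℤ) (x : ℝ) : ℝ :=
  if 0 ≤ r then (fun t => 1 / (lam - t))^[r.toNat] x
  else (fun t => lam - 1 / t)^[(-r).toNat] x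

namespace RemainderAux

/-- `A p n = sin(n π / p)`. -/
noncomputable def A (p : ℕ) (n : ℤ) : ℝ := Real.sin (n * (Real.pi / p))

lemma sin_theta_pos {p : ℕ} (hp : 3 ≤ p) : 0 < Real.sin (Real.pi / p) := by
  have hp0 : (0:ℝ) < p := by exact_mod_cast Nat.lt_of_lt_of_le (by norm_num) hp
  apply Real.sin_pos_of_pos_of_lt_pi
  · exact div_pos Real.pi_pos hp0
  · exact div_lt_self Real.pi_pos (by exact_mod_cast Nat.lt_of_lt_of_le (by norm_num) hp)

lemma A_rec {p : ℕ} {lam : ℝ} (hlam : lam = 2 * Real.cos (Real.pi / p)) (n : ℤ) :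
    A p (n + 1) = lam * A p n - A p (n - 1) := by
  simp only [A, hlam]
  push_cast
  rw [add_mul, sub_mul, one_mul, Real.sin_add, Real.sin_sub]
  ring

lemma formula {p : ℕ} {lam : ℝ} (hp : 3 ≤ p) (hlam : lam = 2 * Real.cos (Real.pi / p))
    (x : ℝ) (hx : ∀ n : ℕ, (fun t => 1 / (lam - t))^[n] x ≠ lam) (n : ℕ) :
    A p n * x - A p ((n : ℤ) + 1) ≠ 0 ∧
      (fun t => 1 / (lam - t))^[n] x =
        (A p ((n : ℤ) - 1) * x - A p n) / (A p n * x - A p ((n : ℤ) + 1)) := by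
  have hs := sin_theta_pos hp
  induction n with
  | zero =>
    have h1 : A p 0 = 0 := by simp [A]
    have h2 : A p 1 = Real.sin (Real.pi / p) := by simp [A]
    have h3 : A p (-1) = -Real.sin (Real.pi / p) := by
      simp only [A]
      push_cast
      rw [neg_mul, one_mul, Real.sin_neg]
    constructor
    · simp only [Nat.cast_zero, zero_add, h1, h2, zero_mul, zero_sub]
      exact neg_ne_zero.mpr hs.ne'
    · simp only [Nat.cast_zero, Function.iterate_zero_apply, zero_sub, zero_add, h1, h2, h3,
        zero_mul, sub_zero]
      field_simp
  | succ n ih =>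
    obtain ⟨hd, hf⟩ := ih
    have hy : (fun t => 1 / (lam - t))^[n] x ≠ lam := hx n
    have hz : lam - (fun t => 1 / (lam - t))^[n] x ≠ 0 := sub_ne_zero.mpr (Ne.symm hy)
    have r1 : A p ((n : ℤ) + 1) = lam * A p n - A p ((n : ℤ) - 1) := A_rec hlam n
    have r2 : A p ((n : ℤ) + 2) = lam * A p ((n : ℤ) + 1) - A p n := by
      have h := A_rec hlam ((n : ℤ) + 1)
      rw [show ((n : ℤ) + 1 + 1) = (n : ℤ) + 2 by ring, show ((n : ℤ) + 1 - 1) = (n : ℤ) by ring] at h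
      exact h
    have hd' : A p ((n : ℤ) + 1) * x - A p ((n : ℤ) + 2) =
        (A p n * x - A p ((n : ℤ) + 1)) * (lam - (fun t => 1 / (lam - t))^[n] x) := by
      rw [hf, mul_sub, mul_div_cancel₀ _ hd, r2, r1]
      ring
    constructor
    · push_cast
      rw [show ((n : ℤ) + 1 + 1) = (n : ℤ) + 2 by ring, hd']
      exact mul_ne_zero hd hz
    · push_cast
      rw [show ((n : ℤ) + 1 + 1) = (n : ℤ) + 2 by ring,
        show ((n : ℤ) + 1 - 1) = (n : ℤ) by ring, Function.iterate_succ_apply']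
      show 1 / (lam - (fun t => 1 / (lam - t))^[n] x) = _
      rw [hd']
      rw [eq_div_iff (mul_ne_zero hd hz)]
      field_simp

lemma iterate_p {p : ℕ} {lam : ℝ} (hp : 3 ≤ p) (hlam : lam = 2 * Real.cos (Real.pi / p))
    (x : ℝ) (hx : ∀ n : ℕ, (fun t => 1 / (lam - t))^[n] x ≠ lam) :
    (fun t => 1 / (lam - t))^[p] x = x := by
  have hs := sin_theta_pos hp
  have hp0 : (p : ℝ) ≠ 0 := by positivity
  obtain ⟨hd, hf⟩ := formula hp hlam x hx p
  have hApi : ((p : ℝ)) * (Real.pi / p) = Real.pi := by field_simp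
  have hAp : A p p = 0 := by
    simp only [A]; push_cast; rw [hApi, Real.sin_pi]
  have hAm : A p ((p : ℤ) - 1) = Real.sin (Real.pi / p) := by
    simp only [A]; push_cast
    rw [sub_mul, one_mul, hApi, Real.sin_sub, Real.sin_pi, Real.cos_pi]
    ring
  have hAp1 : A p ((p : ℤ) + 1) = -Real.sin (Real.pi / p) := by
    simp only [A]; push_cast
    rw [add_mul, one_mul, hApi, Real.sin_add, Real.sin_pi, Real.cos_pi]
    ring
  rw [hf, hAp, hAm, hAp1]
  field_simp
  rw [mul_zero, sub_zero, zero_sub, neg_neg, mul_div_cancel_left₀ _ hs.ne']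

lemma uIter_ofNat (lam : ℝ) (n : ℕ) (x : ℝ) :
    uIter lam n x = (fun t => 1 / (lam - t))^[n] x := by
  simp [uIter]

lemma uIter_neg (lam : ℝ) (n : ℕ) (x : ℝ) :
    uIter lam (-(n : ℤ)) x = (fun t => lam - 1 / t)^[n] x := by
  rcases Nat.eq_zero_or_pos n with h | h
  · subst h; simp [uIter]
  · have : ¬ (0 ≤ -(n : ℤ)) := by omega
    simp [uIter, this]
    exact fun h0 => absurd h0 (by omega)

lemma uIter_step {lam : ℝ} {x : ℝ}
    (hgood : ∀ r : ℤ, uIter lam r x ≠ 0 ∧ uIter lam r x ≠ lam) (r : ℤ) :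
    uIter lam (r + 1) x = (fun t => 1 / (lam - t)) (uIter lam r x) := by
  rcases le_or_gt 0 r with h | h
  · obtain ⟨n, rfl⟩ := Int.eq_ofNat_of_zero_le h
    rw [show (n : ℤ) + 1 = ((n + 1 : ℕ) : ℤ) by push_cast; ring,
      uIter_ofNat, uIter_ofNat, Function.iterate_succ_apply']
  · obtain ⟨m, rfl⟩ : ∃ m : ℕ, r = -((m : ℤ) + 1) := ⟨(-(r+1)).toNat, by omega⟩
    rw [show -((m : ℤ) + 1) + 1 = -(m : ℤ) by ring, uIter_neg,
      show -((m : ℤ) + 1) = -((m + 1 : ℕ) : ℤ) by push_cast; ring,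
      uIter_neg, Function.iterate_succ_apply']
    have hne : (fun t => lam - 1 / t)^[m] x ≠ 0 := by
      have := (hgood (-(m : ℤ))).1
      rwa [uIter_neg] at this
    show _ = 1 / (lam - (lam - 1 / (fun t => lam - 1 / t)^[m] x))
    rw [sub_sub_cancel, one_div_one_div]

lemma uIter_add_nat {lam : ℝ} {x : ℝ}
    (hgood : ∀ r : ℤ, uIter lam r x ≠ 0 ∧ uIter lam r x ≠ lam) (r : ℤ) (n : ℕ) :
    uIter lam (r + n) x = (fun t => 1 / (lam - t))^[n] (uIter lam r x) := by
  induction n with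
  | zero => simp
  | succ n ih =>
    rw [show r + ((n + 1 : ℕ) : ℤ) = (r + n) + 1 by push_cast; ring,
      uIter_step hgood, ih]
    exact (Function.iterate_succ_apply' (fun t => 1 / (lam - t)) n (uIter lam r x)).symm

lemma uIter_periodic {p : ℕ} {lam : ℝ} (hp : 3 ≤ p)
    (hlam : lam = 2 * Real.cos (Real.pi / p)) {x : ℝ}
    (hgood : ∀ r : ℤ, uIter lam r x ≠ 0 ∧ uIter lam r x ≠ lam) (r : ℤ) :
    uIter lam (r + p) x = uIter lam r x := by
  rw [uIter_add_nat hgood]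
  apply iterate_p hp hlam
  intro n
  rw [← uIter_add_nat hgood]
  exact (hgood (r + n)).2

lemma sum_shift_one {p : ℕ} (F : ℤ → ℂ) (hF : ∀ r : ℤ, F (r + p) = F r) (t : ℤ) :
    ∑ m ∈ Finset.range p, F ((m : ℤ) + (t + 1)) = ∑ m ∈ Finset.range p, F ((m : ℤ) + t) := by
  have h1 : ∑ m ∈ Finset.range p, F ((m : ℤ) + (t + 1)) =
      ∑ m ∈ Finset.range p, F (((m + 1 : ℕ) : ℤ) + t) := by
    refine Finset.sum_congr rfl fun m _ => ?_
    congr 1; push_cast; ring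
  rw [h1]
  have e1 := Finset.sum_range_succ' (fun m : ℕ => F ((m : ℤ) + t)) p
  have e2 := Finset.sum_range_succ (fun m : ℕ => F ((m : ℤ) + t)) p
  have e3 : F (((p : ℕ) : ℤ) + t) = F (((0 : ℕ) : ℤ) + t) := by
    push_cast
    rw [add_comm, hF, zero_add]
  linear_combination e2 - e1 + e3

lemma sum_shift {p : ℕ} (F : ℤ → ℂ) (hF : ∀ r : ℤ, F (r + p) = F r) (t : ℤ) :
    ∑ m ∈ Finset.range p, F ((m : ℤ) + t) = ∑ m ∈ Finset.range p, F (m : ℤ) := by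
  induction t using Int.induction_on with
  | zero => simp
  | succ k ih =>
    rw [sum_shift_one F hF (k : ℤ), ih]
  | pred k ih =>
    have h := sum_shift_one F hF (-((k : ℤ) + 1))
    rw [show -((k : ℤ) + 1) + 1 = -(k : ℤ) by ring,
      show -((k : ℤ) + 1) = -(k : ℤ) - 1 by ring] at h
    rw [← h, ih]

end RemainderAux

/-- The second relation for the remainder term: with `λ = 2cos(π/p)`,
`u = U⁻¹` acting as `x ↦ 1/(λ−x)`, and
`R_m(s) = −Σ_ℓ c_ℓ Σ_{j=2}^p Σ_{(a,b)∈P_{ℓ,j}}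
  [R(s; uᵐa, uᵐb) − R(s; u^{m−(j−1)}a, u^{m−(j−1)}b)]`
(so `R_0 = R` and `R_m = ρᵐ(R)`), provided all the integer iterates of the
pairs are distinct nonzero reals different from `λ` (so all iterates are
defined), we have `R_0(s) + R_1(s) + ⋯ + R_{p−1}(s) = 0` for `0 < Re s < 2k`. -/
theorem remainder_second_relation (p : ℕ) (hp : 3 ≤ p)
    (lam : ℝ) (hlam : lam = 2 * Real.cos (Real.pi / p))
    (k : ℕ) (hk : Odd k) (hkpos : 0 < k)
    (L : ℕ) (hL : 0 < L) (c : Fin L → ℂ)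
    (P : Fin L → ℕ → Finset (ℝ × ℝ))
    (hP : ∀ ℓ : Fin L, ∀ j ∈ Finset.Icc 2 p, ∀ q ∈ P ℓ j, ∀ r : ℤ,
      uIter lam r q.1 ≠ uIter lam r q.2 ∧
      uIter lam r q.1 ≠ 0 ∧ uIter lam r q.2 ≠ 0 ∧
      uIter lam r q.1 ≠ lam ∧ uIter lam r q.2 ≠ lam)
    (Rm : ℕ → ℂ → ℂ)
    (hRm : ∀ (m : ℕ) (s : ℂ), Rm m s =
      -∑ ℓ : Fin L, c ℓ * ∑ j ∈ Finset.Icc 2 p, ∑ q ∈ P ℓ j,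
        (Rterm k s (uIter lam (m : ℤ) q.1) (uIter lam (m : ℤ) q.2) -
          Rterm k s (uIter lam ((m : ℤ) - ((j : ℤ) - 1)) q.1)
            (uIter lam ((m : ℤ) - ((j : ℤ) - 1)) q.2))) :
    ∀ s : ℂ, 0 < s.re → s.re < 2 * k →
      ∑ m ∈ Finset.range p, Rm m s = 0 := by
  intro s _ _
  -- the inner telescoping sums all vanish by periodicity of `uIter`
  have key : ∀ ℓ : Fin L, ∀ j ∈ Finset.Icc 2 p, ∀ q ∈ P ℓ j,
      ∑ m ∈ Finset.range p,
        (Rterm k s (uIter lam (m : ℤ) q.1) (uIter lam (m : ℤ) q.2) -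
          Rterm k s (uIter lam ((m : ℤ) - ((j : ℤ) - 1)) q.1)
            (uIter lam ((m : ℤ) - ((j : ℤ) - 1)) q.2)) = 0 := by
    intro ℓ j hj q hq
    have hg1 : ∀ r : ℤ, uIter lam r q.1 ≠ 0 ∧ uIter lam r q.1 ≠ lam := fun r =>
      ⟨(hP ℓ j hj q hq r).2.1, (hP ℓ j hj q hq r).2.2.2.1⟩
    have hg2 : ∀ r : ℤ, uIter lam r q.2 ≠ 0 ∧ uIter lam r q.2 ≠ lam := fun r =>
      ⟨(hP ℓ j hj q hq r).2.2.1, (hP ℓ j hj q hq r).2.2.2.2⟩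
    set F : ℤ → ℂ := fun r => Rterm k s (uIter lam r q.1) (uIter lam r q.2) with hFdef
    have hF : ∀ r : ℤ, F (r + p) = F r := by
      intro r
      simp only [hFdef]
      rw [RemainderAux.uIter_periodic hp hlam hg1 r,
        RemainderAux.uIter_periodic hp hlam hg2 r]
    have h1 : ∑ m ∈ Finset.range p,
        Rterm k s (uIter lam ((m : ℤ) - ((j : ℤ) - 1)) q.1)
          (uIter lam ((m : ℤ) - ((j : ℤ) - 1)) q.2) =
        ∑ m ∈ Finset.range p, F ((m : ℤ) + (-((j : ℤ) - 1))) := by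
      refine Finset.sum_congr rfl fun m _ => ?_
      simp only [hFdef]
      rw [sub_eq_add_neg]
    rw [Finset.sum_sub_distrib, h1, RemainderAux.sum_shift F hF]
    exact sub_self _
  have step1 : ∑ m ∈ Finset.range p, Rm m s =
      -∑ m ∈ Finset.range p, ∑ ℓ : Fin L, c ℓ * ∑ j ∈ Finset.Icc 2 p, ∑ q ∈ P ℓ j,
        (Rterm k s (uIter lam (m : ℤ) q.1) (uIter lam (m : ℤ) q.2) -
          Rterm k s (uIter lam ((m : ℤ) - ((j : ℤ) - 1)) q.1)
            (uIter lam ((m : ℤ) - ((j : ℤ) - 1)) q.2)) := by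
    rw [← Finset.sum_neg_distrib]
    exact Finset.sum_congr rfl fun m _ => hRm m s
  rw [step1, neg_eq_zero, Finset.sum_comm]
  refine Finset.sum_eq_zero fun ℓ _ => ?_
  rw [← Finset.mul_sum]
  refine mul_eq_zero_of_right _ ?_
  rw [Finset.sum_comm]
  refine Finset.sum_eq_zero fun j hj => ?_
  rw [Finset.sum_comm]
  refine Finset.sum_eq_zero fun q hq => ?_
  exact key ℓ j hj q hq
end

section
/- Let m be a positive integer and α a real number. (i) For every s ∈ ℂ with Re(s) < m, both integrals below converge absolutely and ∫₁^∞ y^{s−1} (iy − α)^{−m} dy = i^{−m} ∫₀^1 u^{m−s−1} (1 + iαu)^{−m} du. (ii) The function s ↦ ∫₁^∞ y^{s−1}(iy − α)^{−m} dy, holomorphic on the half-plane Re(s) < m, extends to a meromorphic function on all of ℂ whose poles are at most simple and are contained in the set {m, m+1, m+2, …}. -/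
open MeasureTheory Set Filter Complex

namespace EstarAux

variable (m : ℕ) (α : ℝ)

/-- coefficients of iterated derivatives -/
noncomputable def Cc : ℕ → ℂ
  | 0 => 1
  | (k+1) => Cc k * (Complex.I * α) * (-(m:ℂ) - k)

/-- iterated derivatives of `u ↦ (1+iαu)^{-m}` -/
noncomputable def psi (k : ℕ) (u : ℝ) : ℂ :=
  Cc m α k * (1 + Complex.I * α * u) ^ (-((m + k : ℕ) : ℤ))

lemma base_ne (u : ℝ) : (1 : ℂ) + Complex.I * α * u ≠ 0 := by
  intro h
  have := congrArg Complex.re h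
  simp [Complex.add_re, Complex.mul_re] at this

lemma one_le_norm_base (u : ℝ) : 1 ≤ ‖(1 + Complex.I * α * u : ℂ)‖ := by
  have h : ((1 : ℂ) + Complex.I * α * u).re = 1 := by
    simp [Complex.add_re, Complex.mul_re]
  calc (1:ℝ) = |((1 : ℂ) + Complex.I * α * u).re| := by rw [h]; norm_num
    _ ≤ _ := Complex.abs_re_le_norm _

lemma norm_base_zpow_le (n : ℕ) (u : ℝ) :
    ‖((1:ℂ) + Complex.I * α * u) ^ (-(n : ℤ))‖ ≤ 1 := by
  rw [norm_zpow, zpow_neg, zpow_natCast]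
  rw [inv_le_one_iff₀]
  right
  exact one_le_pow₀ (one_le_norm_base α u)

lemma norm_psi_le (k : ℕ) (u : ℝ) : ‖psi m α k u‖ ≤ ‖Cc m α k‖ := by
  rw [psi, norm_mul]
  calc ‖Cc m α k‖ * _ ≤ ‖Cc m α k‖ * 1 :=
        mul_le_mul_of_nonneg_left (norm_base_zpow_le α _ u) (norm_nonneg _)
    _ = ‖Cc m α k‖ := mul_one _

lemma continuous_psi (k : ℕ) : Continuous (psi m α k) := by
  apply continuous_const.mul
  apply Continuous.zpow₀
  · continuity
  · intro u; exact Or.inl (base_ne α u)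

lemma hasDerivAt_psi (k : ℕ) (u : ℝ) :
    HasDerivAt (psi m α k) (psi m α (k+1) u) u := by
  have hinner : HasDerivAt (fun z : ℂ => 1 + Complex.I * α * z) (Complex.I * α) u := by
    simpa using ((hasDerivAt_id (u:ℂ)).const_mul (Complex.I * (α:ℂ))).const_add 1
  have hz : HasDerivAt (fun z : ℂ => (1 + Complex.I * α * z) ^ (-((m + k : ℕ) : ℤ)))
      ((-((m + k : ℕ) : ℤ) : ℂ) * (1 + Complex.I * α * u) ^ (-((m + k : ℕ) : ℤ) - 1)
        * (Complex.I * α)) u := by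
    have := (hasDerivAt_zpow (-((m + k : ℕ) : ℤ)) ((1 : ℂ) + Complex.I * α * u)
      (Or.inl (base_ne α u))).comp (u : ℂ) hinner
    simpa [Function.comp_def] using this
  have := (hz.const_mul (Cc m α k)).comp_ofReal
  convert this using 1
  show psi m α (k+1) u = _
  rw [psi, Cc]
  have hexp : (-((m + k : ℕ) : ℤ) - 1) = -((m + (k+1) : ℕ) : ℤ) := by push_cast; ring
  rw [← hexp]
  push_cast
  ring
  rfl

/- integrability on `Ioi 1` -/
lemma integrableOn_Ioi (s : ℂ) (hs : s.re < m) :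
    IntegrableOn (fun y : ℝ => (y : ℂ) ^ (s - 1) *
      (Complex.I * (y : ℂ) - (α : ℂ)) ^ (-(m : ℤ))) (Set.Ioi 1) := by
  have hne : ∀ y : ℝ, 1 ≤ y → Complex.I * (y : ℂ) - (α : ℂ) ≠ 0 := by
    intro y hy h
    have := congrArg Complex.im h
    simp [Complex.sub_im, Complex.mul_im] at this
    linarith
  have hmeas : AEStronglyMeasurable (fun y : ℝ => (y : ℂ) ^ (s - 1) *
      (Complex.I * (y : ℂ) - (α : ℂ)) ^ (-(m : ℤ))) (volume.restrict (Set.Ioi 1)) := by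
    apply ContinuousOn.aestronglyMeasurable _ measurableSet_Ioi
    intro y hy
    have hy1 : (1:ℝ) < y := hy
    apply ContinuousWithinAt.mul
    · exact (Complex.continuousAt_ofReal_cpow_const y _
        (Or.inr (by positivity))).continuousWithinAt
    · apply ContinuousAt.continuousWithinAt
      apply ContinuousAt.zpow₀
      · fun_prop
      · exact Or.inl (hne y hy1.le)
  apply Integrable.mono' (g := fun y : ℝ => y ^ (s.re - 1 - m))
    (integrableOn_Ioi_rpow_of_lt (by linarith) one_pos) hmeas
  filter_upwards [ae_restrict_mem measurableSet_Ioi] with y hy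
  have hy1 : (1:ℝ) < y := hy
  have hy0 : (0:ℝ) < y := by linarith
  rw [norm_mul]
  have h1 : ‖(y:ℂ) ^ (s - 1)‖ = y ^ (s.re - 1) := by
    rw [Complex.norm_cpow_eq_rpow_re_of_pos hy0]
    simp [Complex.sub_re]
  have hyabs : y ≤ ‖Complex.I * (y:ℂ) - (α:ℂ)‖ := by
    calc y = |(Complex.I * (y:ℂ) - (α:ℂ)).im| := by
          simp [Complex.sub_im, Complex.mul_im, abs_of_pos hy0]
      _ ≤ _ := Complex.abs_im_le_norm _
  have h2 : ‖(Complex.I * (y:ℂ) - (α:ℂ)) ^ (-(m : ℤ))‖ ≤ y ^ (-(m:ℝ)) := by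
    rw [norm_zpow]
    rw [Real.rpow_neg hy0.le, Real.rpow_natCast]
    rw [zpow_neg, zpow_natCast]
    apply inv_anti₀ (by positivity)
    exact pow_le_pow_left₀ hy0.le hyabs m
  calc ‖(y:ℂ) ^ (s-1)‖ * ‖(Complex.I * (y:ℂ) - (α:ℂ)) ^ (-(m:ℤ))‖
      ≤ y ^ (s.re - 1) * y ^ (-(m:ℝ)) := by
        rw [h1]; exact mul_le_mul_of_nonneg_left h2 (by positivity)
    _ = y ^ (s.re - 1 - m) := by rw [← Real.rpow_add hy0]; ring_nf

/- integrability on `Ioo 0 1` : general version with continuous bounded `φ` -/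
lemma integrableOn_Ioo_aux (z : ℂ) (hz : 0 < z.re) (φ : ℝ → ℂ) (hφ : Continuous φ)
    (Cb : ℝ) (hCb : ∀ u : ℝ, ‖φ u‖ ≤ Cb) :
    IntegrableOn (fun u : ℝ => (u : ℂ) ^ (z - 1) * φ u) (Set.Ioo 0 1) := by
  have hmeas : AEStronglyMeasurable (fun u : ℝ => (u : ℂ) ^ (z - 1) * φ u)
      (volume.restrict (Set.Ioo (0:ℝ) 1)) := by
    apply ContinuousOn.aestronglyMeasurable _ measurableSet_Ioo
    intro u hu
    exact ((Complex.continuousAt_ofReal_cpow_const u _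
      (Or.inr hu.1.ne')).continuousWithinAt).mul hφ.continuousWithinAt
  have hint : IntegrableOn (fun u : ℝ => Cb * u ^ (z.re - 1)) (Set.Ioo (0:ℝ) 1) := by
    apply Integrable.const_mul
    have := intervalIntegral.intervalIntegrable_rpow' (a := 0) (b := 1) (r := z.re - 1)
      (by linarith)
    rw [intervalIntegrable_iff_integrableOn_Ioo_of_le (by norm_num)] at this
    exact this
  apply Integrable.mono' hint hmeas
  filter_upwards [ae_restrict_mem measurableSet_Ioo] with u hu
  rw [norm_mul]
  have h1 : ‖(u:ℂ) ^ (z - 1)‖ = u ^ (z.re - 1) := by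
    rw [Complex.norm_cpow_eq_rpow_re_of_pos hu.1]
    simp [Complex.sub_re]
  rw [h1, mul_comm]
  exact mul_le_mul_of_nonneg_right (hCb u) (Real.rpow_nonneg hu.1.le _)

/-- the Mellin transform of the truncated `psi k` -/
noncomputable def Fm (k : ℕ) : ℂ → ℂ :=
  mellin (Set.indicator (Set.Ioc 0 1) (psi m α k))

lemma Fm_eq (k : ℕ) (z : ℂ) :
    Fm m α k z = ∫ u in Set.Ioo (0:ℝ) 1, (u : ℂ) ^ (z - 1) * psi m α k u := by
  rw [Fm, mellin]
  rw [← MeasureTheory.integral_Ioc_eq_integral_Ioo]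
  have h1 : ∀ x : ℝ, (x:ℂ) ^ (z - 1) • (Set.indicator (Set.Ioc (0:ℝ) 1) (psi m α k) x)
      = Set.indicator (Set.Ioc (0:ℝ) 1) (fun u => (u:ℂ) ^ (z-1) * psi m α k u) x := by
    intro x
    by_cases hx : x ∈ Set.Ioc (0:ℝ) 1
    · simp [Set.indicator_of_mem hx, smul_eq_mul]
    · simp [Set.indicator_of_notMem hx]
  simp_rw [h1]
  rw [MeasureTheory.integral_indicator measurableSet_Ioc]
  rw [Measure.restrict_restrict measurableSet_Ioc]
  congr 1
  rw [Set.inter_eq_left.mpr]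
  exact fun x hx => hx.1

lemma Fm_differentiableAt (k : ℕ) (z : ℂ) (hz : 0 < z.re) :
    DifferentiableAt ℂ (Fm m α k) z := by
  apply mellin_differentiableAt_of_isBigO_rpow (a := z.re + 1) (b := 0)
  · have : Integrable (Set.indicator (Set.Ioc (0:ℝ) 1) (psi m α k)) :=
      MeasureTheory.IntegrableOn.integrable_indicator
        ((continuous_psi m α k).integrableOn_Ioc) measurableSet_Ioc
    exact this.locallyIntegrable.locallyIntegrableOn _
  · have hev : (Set.indicator (Set.Ioc (0:ℝ) 1) (psi m α k)) =ᶠ[atTop] (fun _ => (0:ℂ)) := by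
      filter_upwards [eventually_gt_atTop (1:ℝ)] with x hx
      exact Set.indicator_of_notMem (fun h => absurd h.2 (not_le.mpr hx)) _
    exact hev.trans_isBigO (Asymptotics.isBigO_zero _ _)
  · linarith
  · apply Asymptotics.IsBigO.of_bound ‖Cc m α k‖
    filter_upwards [self_mem_nhdsWithin] with x (hx : 0 < x)
    have h0 : x ^ (-(0:ℝ)) = 1 := by rw [neg_zero, Real.rpow_zero]
    rw [h0, norm_one, mul_one]
    calc ‖(Set.Ioc (0:ℝ) 1).indicator (psi m α k) x‖ ≤ ‖psi m α k x‖ :=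
          norm_indicator_le_norm_self _ _
      _ ≤ ‖Cc m α k‖ := norm_psi_le m α k x
  · exact hz

/- integration by parts -/
lemma ibp (k : ℕ) (a : ℂ) (ha : 0 < a.re) :
    Fm m α k a = psi m α k 1 / a - Fm m α (k+1) (a+1) / a := by
  have ha0 : a ≠ 0 := fun h => by simp [h] at ha
  set Φ : ℝ → ℂ := fun u => (u:ℂ) ^ a / a * psi m α k u with hΦ
  set Φ' : ℝ → ℂ := fun u =>
    (u:ℂ) ^ (a-1) * psi m α k u + (u:ℂ) ^ a / a * psi m α (k+1) u with hΦ'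
  have hint1 : IntegrableOn (fun u : ℝ => (u:ℂ) ^ (a-1) * psi m α k u) (Set.Ioo (0:ℝ) 1) :=
    integrableOn_Ioo_aux a ha _ (continuous_psi m α k) _ (norm_psi_le m α k)
  have hint2 : IntegrableOn (fun u : ℝ => (u:ℂ) ^ a * psi m α (k+1) u) (Set.Ioo (0:ℝ) 1) := by
    have := integrableOn_Ioo_aux (a+1) (by simp [Complex.add_re]; linarith) _
      (continuous_psi m α (k+1)) _ (norm_psi_le m α (k+1))
    have e2 : a + 1 - 1 = a := by ring
    rwa [e2] at this
  have hint2' : IntegrableOn (fun u : ℝ => (u:ℂ) ^ a / a * psi m α (k+1) u)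
      (Set.Ioo (0:ℝ) 1) := by
    have hfe : (fun u : ℝ => (u:ℂ) ^ a / a * psi m α (k+1) u)
        = fun u : ℝ => ((u:ℂ) ^ a * psi m α (k+1) u) / a := by funext u; ring
    rw [hfe]
    exact hint2.div_const a
  have hderiv : ∀ u ∈ Set.Ioo (0:ℝ) 1, HasDerivWithinAt Φ (Φ' u) (Set.Ioi u) u := by
    intro u hu
    apply HasDerivAt.hasDerivWithinAt
    have hr : a - 1 ≠ -1 := by
      intro h; apply ha0; linear_combination h
    have h1 := hasDerivAt_ofReal_cpow_const' (x := u) (ne_of_gt hu.1) hr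
    have e : a - 1 + 1 = a := by ring
    rw [e] at h1
    have := h1.mul (hasDerivAt_psi m α k u)
    convert this using 1
    rfl
    rfl
  have hcont : ContinuousOn Φ (Set.Icc 0 1) := by
    apply Continuous.continuousOn
    exact ((Complex.continuous_ofReal_cpow_const ha).div_const a).mul (continuous_psi m α k)
  have hii : IntervalIntegrable Φ' volume 0 1 := by
    rw [intervalIntegrable_iff_integrableOn_Ioo_of_le (by norm_num)]
    exact hint1.add hint2'
  have key := intervalIntegral.integral_eq_sub_of_hasDeriv_right_of_le (by norm_num : (0:ℝ) ≤ 1)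
    hcont hderiv hii
  rw [intervalIntegral.integral_of_le (by norm_num : (0:ℝ) ≤ 1),
    MeasureTheory.integral_Ioc_eq_integral_Ioo] at key
  have hΦ1 : Φ 1 = psi m α k 1 / a := by
    simp [hΦ, Complex.one_cpow]
    ring
  have hΦ0 : Φ 0 = 0 := by
    simp [hΦ, Complex.zero_cpow ha0]
  rw [hΦ1, hΦ0, sub_zero] at key
  rw [MeasureTheory.integral_add hint1 hint2'] at key
  have hsplit : ∫ u in Set.Ioo (0:ℝ) 1, (u:ℂ) ^ a / a * psi m α (k+1) u
      = (∫ u in Set.Ioo (0:ℝ) 1, (u:ℂ) ^ a * psi m α (k+1) u) / a := by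
    rw [← integral_div]
    apply setIntegral_congr_fun measurableSet_Ioo
    intro u _; ring
  rw [hsplit] at key
  rw [Fm_eq, Fm_eq]
  have e2 : a + 1 - 1 = a := by ring
  rw [e2]
  have := sub_eq_of_eq_add' key.symm
  linear_combination -this

/- change of variables -/
lemma image_inv_Ioo : (fun u : ℝ => u⁻¹) '' (Set.Ioo 0 1) = Set.Ioi 1 := by
  ext y
  constructor
  · rintro ⟨u, ⟨hu0, hu1⟩, rfl⟩
    exact (one_lt_inv_iff₀).mpr ⟨hu0, hu1⟩
  · intro hy
    have hy1 : (1:ℝ) < y := hy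
    exact ⟨y⁻¹, ⟨inv_pos.mpr (by linarith), inv_lt_one_of_one_lt₀ hy1⟩, inv_inv y⟩

lemma subst_eq (s : ℂ) :
    ∫ y in Set.Ioi (1:ℝ), (y : ℂ) ^ (s - 1) * (Complex.I * (y : ℂ) - (α : ℂ)) ^ (-(m : ℤ))
      = Complex.I ^ (-(m : ℤ)) * ∫ u in Set.Ioo (0:ℝ) 1,
          (u : ℂ) ^ ((m : ℂ) - s - 1) * (1 + Complex.I * (α : ℂ) * (u : ℂ)) ^ (-(m : ℤ)) := by
  rw [← image_inv_Ioo]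
  rw [integral_image_eq_integral_abs_deriv_smul measurableSet_Ioo
    (fun x hx => (hasDerivAt_inv (ne_of_gt hx.1)).hasDerivWithinAt) (inv_injective.injOn)]
  rw [← MeasureTheory.integral_const_mul]
  apply setIntegral_congr_fun measurableSet_Ioo
  intro x hx
  have hx0 : (0:ℝ) < x := hx.1
  have hxC : (x:ℂ) ≠ 0 := Complex.ofReal_ne_zero.mpr hx0.ne'
  have harg : (x:ℂ).arg ≠ Real.pi := by
    rw [Complex.arg_ofReal_of_nonneg hx0.le]
    exact (Real.pi_ne_zero).symm
  show |(-(x^2)⁻¹)| • (((x⁻¹:ℝ):ℂ) ^ (s-1) * (Complex.I * ((x⁻¹:ℝ):ℂ) - (α:ℂ)) ^ (-(m:ℤ)))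
      = Complex.I ^ (-(m:ℤ)) * ((x:ℂ) ^ ((m:ℂ) - s - 1) * (1 + Complex.I * (α:ℂ) * (x:ℂ)) ^ (-(m:ℤ)))
  have habs : |(-(x^2)⁻¹)| = (x^2)⁻¹ := by
    rw [abs_neg, abs_of_pos (by positivity)]
  rw [habs]
  rw [Complex.real_smul, Complex.ofReal_inv, Complex.ofReal_pow]
  have hp1 : ((x⁻¹ : ℝ) : ℂ) ^ (s - 1) = (x:ℂ) ^ (1 - s) := by
    rw [Complex.ofReal_inv, Complex.inv_cpow _ _ harg, ← Complex.cpow_neg, neg_sub]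
  have hp2 : Complex.I * ((x⁻¹ : ℝ) : ℂ) - (α : ℂ)
      = Complex.I * (1 + Complex.I * α * x) * (x:ℂ)⁻¹ := by
    rw [Complex.ofReal_inv]
    field_simp
    ring_nf
    simp [Complex.I_sq]
    ring
  rw [hp1, hp2]
  rw [mul_zpow, mul_zpow]
  rw [inv_zpow, ← zpow_neg, neg_neg]
  have e2 : (x:ℂ) ^ (m:ℤ) = (x:ℂ) ^ ((m : ℂ)) := by
    rw [show ((m:ℂ)) = ((m:ℤ):ℂ) by push_cast; ring, Complex.cpow_intCast]
  have e1 : ((x:ℂ)^2)⁻¹ = (x:ℂ) ^ ((-2 : ℂ)) := by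
    rw [show ((-2:ℂ)) = ((-2:ℤ):ℂ) by norm_num, Complex.cpow_intCast]
    rw [zpow_neg, show ((2:ℤ)) = ((2:ℕ):ℤ) from rfl, zpow_natCast]
  rw [e2, e1]
  have ecomb : (x:ℂ) ^ ((-2:ℂ)) * ((x:ℂ) ^ (1 - s) * (x:ℂ) ^ ((m:ℂ)))
      = (x:ℂ) ^ ((m:ℂ) - s - 1) := by
    rw [← Complex.cpow_add _ _ hxC, ← Complex.cpow_add _ _ hxC]
    congr 1
    ring
  calc (x:ℂ)^((-2:ℂ)) * ((x:ℂ)^(1-s) * (Complex.I ^ (-(m:ℤ)) * (1 + Complex.I*α*x)^(-(m:ℤ)) * (x:ℂ)^((m:ℂ))))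
      = Complex.I ^ (-(m:ℤ)) * (((x:ℂ)^((-2:ℂ)) * ((x:ℂ)^(1-s) * (x:ℂ)^((m:ℂ)))) * (1 + Complex.I*α*x)^(-(m:ℤ))) := by ring
    _ = Complex.I ^ (-(m:ℤ)) * ((x:ℂ)^((m:ℂ) - s - 1) * (1 + Complex.I*α*x)^(-(m:ℤ))) := by rw [ecomb]

/- pole machinery -/
noncomputable def Pp (K : ℕ) (s : ℂ) : ℂ := ∏ j ∈ Finset.range K, ((m:ℂ) + j - s)

noncomputable def gK (K : ℕ) (s : ℂ) : ℂ :=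
  (∑ k ∈ Finset.range K, (-1)^k * psi m α k 1 / Pp m (k+1) s)
  + (-1:ℂ)^K * Fm m α K ((m:ℂ) + K - s) / Pp m K s

lemma Pp_ne_zero (K : ℕ) (s : ℂ) (h : ∀ j < K, s ≠ (m:ℂ) + j) : Pp m K s ≠ 0 := by
  rw [Pp, Finset.prod_ne_zero_iff]
  intro j hj
  exact sub_ne_zero_of_ne (fun hc => h j (Finset.mem_range.mp hj) hc.symm)

lemma analyticAt_prod (T : Finset ℕ) (s₀ : ℂ) :
    AnalyticAt ℂ (fun s => ∏ j ∈ T, ((m:ℂ) + j - s)) s₀ :=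
  T.analyticAt_fun_prod (fun _ _ => analyticAt_const.sub analyticAt_id)

lemma analyticAt_Pp (K : ℕ) (s₀ : ℂ) : AnalyticAt ℂ (Pp m K) s₀ := analyticAt_prod m _ s₀

lemma re_aux (K : ℕ) (s : ℂ) (h : s.re < m + K) : 0 < ((m:ℂ) + K - s).re := by
  simp only [Complex.sub_re, Complex.add_re, Complex.natCast_re]
  linarith

lemma analyticAt_FmComp (k : ℕ) (s₀ : ℂ) (h : s₀.re < m + k) :
    AnalyticAt ℂ (fun s => Fm m α k ((m:ℂ) + k - s)) s₀ := by
  have hopen : IsOpen {z : ℂ | 0 < z.re} := isOpen_lt continuous_const Complex.continuous_re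
  have hdiff : DifferentiableOn ℂ (Fm m α k) {z : ℂ | 0 < z.re} :=
    fun z hz => (Fm_differentiableAt m α k z hz).differentiableWithinAt
  have hFm : AnalyticAt ℂ (Fm m α k) ((m:ℂ) + k - s₀) :=
    hdiff.analyticAt (hopen.mem_nhds (re_aux m k s₀ h))
  exact hFm.comp (analyticAt_const.sub analyticAt_id)

lemma analyticAt_gK (K : ℕ) (s₀ : ℂ) (hre : s₀.re < m + K)
    (hav : ∀ j < K, s₀ ≠ (m:ℂ) + j) : AnalyticAt ℂ (gK m α K) s₀ := by
  apply AnalyticAt.add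
  · apply Finset.analyticAt_fun_sum
    intro k hk
    apply AnalyticAt.div analyticAt_const (analyticAt_Pp m (k+1) s₀)
    exact Pp_ne_zero m (k+1) s₀ (fun j hj => hav j (lt_of_lt_of_le hj (Finset.mem_range.mp hk)))
  · apply AnalyticAt.div
    · exact analyticAt_const.mul (analyticAt_FmComp m α K s₀ hre)
    · exact analyticAt_Pp m K s₀
    · exact Pp_ne_zero m K s₀ hav

lemma gK_zero (s : ℂ) : gK m α 0 s = Fm m α 0 ((m:ℂ) - s) := by
  simp [gK, Pp]

lemma gK_step (K : ℕ) (s : ℂ) (hre : s.re < m + K) (hav : ∀ j < K, s ≠ (m:ℂ) + j) :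
    gK m α K s = gK m α (K+1) s := by
  have ha : 0 < ((m:ℂ) + K - s).re := re_aux m K s hre
  have ha0 : (m:ℂ) + K - s ≠ 0 := fun h => by rw [h] at ha; simp at ha
  have hP : Pp m K s ≠ 0 := Pp_ne_zero m K s hav
  have hibp := ibp m α K ((m:ℂ) + K - s) ha
  have harg : (m:ℂ) + K - s + 1 = (m:ℂ) + (K+1 : ℕ) - s := by push_cast; ring
  rw [harg] at hibp
  rw [gK, gK, Finset.sum_range_succ]
  rw [hibp]
  have hPsucc : Pp m (K+1) s = Pp m K s * ((m:ℂ) + K - s) := by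
    rw [Pp, Pp, Finset.prod_range_succ]
  rw [hPsucc]
  field_simp
  ring

lemma gK_chain (K K' : ℕ) (hK : K ≤ K') (s : ℂ) (hre : s.re < m + K)
    (hav : ∀ j < K', s ≠ (m:ℂ) + j) : gK m α K s = gK m α K' s := by
  induction K', hK using Nat.le_induction with
  | base => rfl
  | succ K' hKK' ih =>
    rw [ih (fun j hj => hav j (Nat.lt_succ_of_lt hj))]
    apply gK_step m α K' s _ (fun j hj => hav j (Nat.lt_succ_of_lt hj))
    have : (K:ℝ) ≤ K' := by exact_mod_cast hKK'
    linarith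

/-- cutoff -/
noncomputable def Kf (s : ℂ) : ℕ := ⌈s.re - m⌉₊ + 1

lemma Kf_lt (s : ℂ) : s.re < m + Kf m s := by
  have := Nat.le_ceil (s.re - m)
  rw [Kf]; push_cast; linarith

lemma Kf_le (B : ℕ) (s : ℂ) (h : s.re < m + B) : Kf m s ≤ B + 1 := by
  rw [Kf]
  have : ⌈s.re - m⌉₊ ≤ B := Nat.ceil_le.mpr (by linarith)
  omega

/-- the meromorphic continuation (up to the constant `i^{-m}`) -/
noncomputable def Gg (s : ℂ) : ℂ := gK m α (Kf m s) s

lemma Gg_eq_of (B : ℕ) (s : ℂ) (hre : s.re < m + B) (hav : ∀ j < B + 1, s ≠ (m:ℂ) + j) :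
    Gg m α s = gK m α (B+1) s :=
  gK_chain m α (Kf m s) (B+1) (Kf_le m B s hre) s (Kf_lt m s) hav

lemma Gg_eq_F0 (s : ℂ) (hre : s.re < m) : Gg m α s = Fm m α 0 ((m:ℂ) - s) := by
  rw [← gK_zero m α s]
  refine (gK_chain m α 0 (Kf m s) (Nat.zero_le _) s (by simpa using hre) ?_).symm
  intro j _ hc
  have h1 : s.re = m + j := by rw [hc]; simp
  have h2 : (0:ℝ) ≤ j := Nat.cast_nonneg j
  linarith

lemma analyticAt_Gg (s₀ : ℂ) (h : ∀ n : ℕ, s₀ ≠ (m:ℂ) + n) : AnalyticAt ℂ (Gg m α) s₀ := by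
  set B := Kf m s₀ with hB
  have hre : s₀.re < m + B := Kf_lt m s₀
  have hgK : AnalyticAt ℂ (gK m α (B+1)) s₀ := by
    apply analyticAt_gK m α (B+1) s₀ _ (fun j _ => h j)
    push_cast; linarith
  apply hgK.congr
  have hV : IsOpen ({s : ℂ | s.re < m + B} ∩ ⋂ j ∈ Finset.range (B+1), {(m:ℂ)+j}ᶜ) := by
    apply IsOpen.inter (isOpen_lt Complex.continuous_re continuous_const)
    exact isOpen_biInter_finset (fun j _ => isOpen_compl_singleton)
  have hmem : s₀ ∈ ({s : ℂ | s.re < m + B} ∩ ⋂ j ∈ Finset.range (B+1), {(m:ℂ)+j}ᶜ) := by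
    refine ⟨hre, ?_⟩
    simp only [Set.mem_iInter, Set.mem_compl_iff, Set.mem_singleton_iff]
    exact fun j _ => h j
  filter_upwards [hV.mem_nhds hmem] with s hs
  obtain ⟨hs1, hs2⟩ := hs
  simp only [Set.mem_iInter, Set.mem_compl_iff, Set.mem_singleton_iff] at hs2
  exact (Gg_eq_of m α B s hs1 (fun j hj => hs2 j (Finset.mem_range.mpr hj))).symm

/-- residue-type auxiliary factor -/
noncomputable def Qq (n₀ k : ℕ) (s : ℂ) : ℂ :=
  if n₀ ≤ k then -((∏ j ∈ (Finset.range (k+1)).erase n₀, ((m:ℂ) + j - s))⁻¹)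
  else (s - ((m:ℂ) + n₀)) / Pp m (k+1) s

noncomputable def hh (n₀ : ℕ) (s : ℂ) : ℂ :=
  (∑ k ∈ Finset.range (n₀+2), (-1:ℂ)^k * psi m α k 1 * Qq m n₀ k s)
  + (-1:ℂ)^(n₀+2) * Fm m α (n₀+2) ((m:ℂ) + (n₀+2:ℕ) - s)
      * (-((∏ j ∈ (Finset.range (n₀+2)).erase n₀, ((m:ℂ) + j - s))⁻¹))

lemma erase_prod_ne_zero (n₀ : ℕ) (T : Finset ℕ) :
    ∏ j ∈ T.erase n₀, ((m:ℂ) + j - ((m:ℂ) + n₀)) ≠ 0 := by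
  rw [Finset.prod_ne_zero_iff]
  intro j hj
  have hjne : j ≠ n₀ := (Finset.mem_erase.mp hj).1
  intro hc
  apply hjne
  have : (j:ℂ) = (n₀:ℂ) := by linear_combination hc
  exact_mod_cast this

lemma analyticAt_Qq (n₀ k : ℕ) :
    AnalyticAt ℂ (Qq m n₀ k) ((m:ℂ) + n₀) := by
  unfold Qq
  by_cases hnk : n₀ ≤ k
  · simp only [if_pos hnk]
    exact ((analyticAt_prod m _ _).inv (erase_prod_ne_zero m n₀ _)).neg
  · simp only [if_neg hnk]
    push_neg at hnk
    apply AnalyticAt.div (analyticAt_id.sub analyticAt_const) (analyticAt_Pp m _ _)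
    rw [Pp, Finset.prod_ne_zero_iff]
    intro j hj
    have hj' : j < k + 1 := Finset.mem_range.mp hj
    intro hc
    have h1 : (j:ℂ) = (n₀:ℂ) := by linear_combination hc
    have : j = n₀ := by exact_mod_cast h1
    omega

lemma analyticAt_hh (n₀ : ℕ) : AnalyticAt ℂ (hh m α n₀) ((m:ℂ) + n₀) := by
  apply AnalyticAt.add
  · apply Finset.analyticAt_fun_sum
    intro k _
    exact analyticAt_const.mul (analyticAt_Qq m n₀ k)
  · apply AnalyticAt.mul
    · apply analyticAt_const.mul
      apply analyticAt_FmComp m α (n₀+2)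
      simp only [Complex.add_re, Complex.natCast_re]
      push_cast; linarith
    · exact ((analyticAt_prod m _ _).inv (erase_prod_ne_zero m n₀ _)).neg

lemma cancel_helper (w A E : ℂ) (hw : w ≠ 0) (hE : E ≠ 0) :
    w * (A / (-w * E)) = A * (-(E⁻¹)) := by field_simp

/-- key identity off the pole -/
lemma hh_eq (n₀ : ℕ) (s : ℂ) (hs : s ≠ (m:ℂ) + n₀)
    (hav : ∀ j < n₀ + 2, j ≠ n₀ → s ≠ (m:ℂ) + j) :
    hh m α n₀ s = (s - ((m:ℂ) + n₀)) * gK m α (n₀+2) s := by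
  have hsne : s - ((m:ℂ) + n₀) ≠ 0 := sub_ne_zero_of_ne hs
  have hfac : ∀ T : Finset ℕ, n₀ ∈ T →
      (∏ j ∈ T, ((m:ℂ) + j - s)) = ((m:ℂ) + n₀ - s) * ∏ j ∈ T.erase n₀, ((m:ℂ) + j - s) :=
    fun T hT => (Finset.mul_prod_erase T _ hT).symm
  have hEne : ∀ T : Finset ℕ, (∀ j ∈ T, j ≠ n₀ ∧ j < n₀ + 2) →
      (∏ j ∈ T, ((m:ℂ) + j - s)) ≠ 0 := by
    intro T hT
    rw [Finset.prod_ne_zero_iff]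
    intro j hj hc
    exact (hav j (hT j hj).2 (hT j hj).1) (by linear_combination -hc)
  rw [hh, gK, mul_add, Finset.mul_sum]
  congr 1
  · apply Finset.sum_congr rfl
    intro k hk
    have hk2 : k < n₀ + 2 := Finset.mem_range.mp hk
    simp only [Qq]
    by_cases hnk : n₀ ≤ k
    · simp only [if_pos hnk]
      have hmem : n₀ ∈ Finset.range (k+1) := Finset.mem_range.mpr (by omega)
      have hP : Pp m (k+1) s = ((m:ℂ) + n₀ - s) * ∏ j ∈ (Finset.range (k+1)).erase n₀,
          ((m:ℂ) + j - s) := hfac _ hmem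
      have hE : (∏ j ∈ (Finset.range (k+1)).erase n₀, ((m:ℂ) + j - s)) ≠ 0 := by
        apply hEne
        intro j hj
        have := Finset.mem_erase.mp hj
        exact ⟨this.1, by have := Finset.mem_range.mp this.2; omega⟩
      rw [hP]
      have hm0 : (m:ℂ) + n₀ - s = -(s - ((m:ℂ) + n₀)) := by ring
      rw [hm0, cancel_helper _ _ _ hsne hE]
    · simp only [if_neg hnk]
      ring
  · have hmem : n₀ ∈ Finset.range (n₀+2) := Finset.mem_range.mpr (by omega)
    have hP : Pp m (n₀+2) s = ((m:ℂ) + n₀ - s) * ∏ j ∈ (Finset.range (n₀+2)).erase n₀,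
        ((m:ℂ) + j - s) := hfac _ hmem
    have hE : (∏ j ∈ (Finset.range (n₀+2)).erase n₀, ((m:ℂ) + j - s)) ≠ 0 := by
      apply hEne
      intro j hj
      have := Finset.mem_erase.mp hj
      exact ⟨this.1, Finset.mem_range.mp this.2⟩
    rw [hP]
    have hm0 : (m:ℂ) + n₀ - s = -(s - ((m:ℂ) + n₀)) := by ring
    rw [hm0, cancel_helper _ _ _ hsne hE]

lemma psi_zero (u : ℝ) : psi m α 0 u = (1 + Complex.I * α * u) ^ (-(m : ℤ)) := by
  simp [psi, Cc]

end EstarAux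

open EstarAux in
/-- Building block of `E*(s)`: for a positive integer `m` and `α ∈ ℝ`,
(i) for `Re s < m` both `∫₁^∞ y^{s−1}(iy−α)^{−m} dy` and
`∫₀^1 u^{m−s−1}(1+iαu)^{−m} du` converge absolutely and
`∫₁^∞ y^{s−1}(iy−α)^{−m} dy = i^{−m} ∫₀^1 u^{m−s−1}(1+iαu)^{−m} du`;
(ii) `s ↦ ∫₁^∞ y^{s−1}(iy−α)^{−m} dy` extends to a meromorphic function on
`ℂ` with at worst simple poles contained in `{m, m+1, m+2, …}`. -/
theorem Estar_building_block (m : ℕ) (hm : 0 < m) (α : ℝ) :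
    (∀ s : ℂ, s.re < m →
      IntegrableOn (fun y : ℝ => (y : ℂ) ^ (s - 1) *
        (Complex.I * (y : ℂ) - (α : ℂ)) ^ (-(m : ℤ))) (Set.Ioi 1) ∧
      IntegrableOn (fun u : ℝ => (u : ℂ) ^ ((m : ℂ) - s - 1) *
        (1 + Complex.I * (α : ℂ) * (u : ℂ)) ^ (-(m : ℤ))) (Set.Ioo 0 1) ∧
      ∫ y in Set.Ioi (1 : ℝ), (y : ℂ) ^ (s - 1) *
          (Complex.I * (y : ℂ) - (α : ℂ)) ^ (-(m : ℤ)) =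
        Complex.I ^ (-(m : ℤ)) * ∫ u in Set.Ioo (0 : ℝ) 1,
          (u : ℂ) ^ ((m : ℂ) - s - 1) *
            (1 + Complex.I * (α : ℂ) * (u : ℂ)) ^ (-(m : ℤ))) ∧
    ∃ g : ℂ → ℂ,
      (∀ s : ℂ, s.re < m → g s = ∫ y in Set.Ioi (1 : ℝ),
        (y : ℂ) ^ (s - 1) * (Complex.I * (y : ℂ) - (α : ℂ)) ^ (-(m : ℤ))) ∧
      (∀ s : ℂ, (∀ n : ℕ, s ≠ (m : ℂ) + (n : ℂ)) → AnalyticAt ℂ g s) ∧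
      (∀ n : ℕ, ∃ h : ℂ → ℂ, AnalyticAt ℂ h ((m : ℂ) + (n : ℂ)) ∧
        ∀ᶠ s in nhdsWithin ((m : ℂ) + (n : ℂ)) {((m : ℂ) + (n : ℂ))}ᶜ,
          g s = h s / (s - ((m : ℂ) + (n : ℂ)))) := by
  have hIoo : ∀ s : ℂ, s.re < m → IntegrableOn (fun u : ℝ => (u : ℂ) ^ ((m : ℂ) - s - 1) *
      (1 + Complex.I * (α : ℂ) * (u : ℂ)) ^ (-(m : ℤ))) (Set.Ioo 0 1) := by
    intro s hs
    have hre : 0 < ((m:ℂ) - s).re := by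
      simp only [Complex.sub_re, Complex.natCast_re]; linarith
    have := integrableOn_Ioo_aux ((m:ℂ) - s) hre
      (fun u => (1 + Complex.I * α * u) ^ (-(m : ℤ)))
      (by
        apply Continuous.zpow₀
        · continuity
        · intro u; exact Or.inl (base_ne α u)) 1
      (fun u => norm_base_zpow_le α m u)
    exact this
  refine ⟨fun s hs => ⟨integrableOn_Ioi m α s hs, hIoo s hs, subst_eq m α s⟩, ?_⟩
  refine ⟨fun s => Complex.I ^ (-(m:ℤ)) * Gg m α s, ?_, ?_, ?_⟩
  · -- agrees with the integral for re s < m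
    intro s hs
    show Complex.I ^ (-(m:ℤ)) * Gg m α s = _
    rw [Gg_eq_F0 m α s hs, Fm_eq, subst_eq m α s]
    congr 1
    apply setIntegral_congr_fun measurableSet_Ioo
    intro u _
    simp only []
    rw [psi_zero]
  · -- analytic off the poles
    intro s h
    exact analyticAt_const.mul (analyticAt_Gg m α s h)
  · -- simple poles
    intro n₀
    refine ⟨fun s => Complex.I ^ (-(m:ℤ)) * hh m α n₀ s,
      analyticAt_const.mul (analyticAt_hh m α n₀), ?_⟩
    set s₀ : ℂ := (m:ℂ) + n₀ with hs₀
    have hWopen : IsOpen ({s : ℂ | s.re < m + (n₀+1)}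
        ∩ ⋂ j ∈ (Finset.range (n₀+2)).erase n₀, {(m:ℂ)+j}ᶜ) := by
      apply IsOpen.inter (isOpen_lt Complex.continuous_re continuous_const)
      exact isOpen_biInter_finset (fun j _ => isOpen_compl_singleton)
    have hmem : s₀ ∈ ({s : ℂ | s.re < m + (n₀+1)}
        ∩ ⋂ j ∈ (Finset.range (n₀+2)).erase n₀, {(m:ℂ)+j}ᶜ) := by
      constructor
      · show s₀.re < m + (n₀+1)
        rw [hs₀]
        simp only [Complex.add_re, Complex.natCast_re]
        push_cast
        linarith
      · simp only [Set.mem_iInter, Set.mem_compl_iff, Set.mem_singleton_iff]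
        intro j hj
        have hjne : j ≠ n₀ := (Finset.mem_erase.mp hj).1
        rw [hs₀]
        intro hc
        have h1 : (n₀:ℂ) = (j:ℂ) := by linear_combination hc
        have : n₀ = j := by exact_mod_cast h1
        exact hjne this.symm
    filter_upwards [mem_nhdsWithin_of_mem_nhds (hWopen.mem_nhds hmem),
      self_mem_nhdsWithin] with s hsW hscompl
    have hsne : s ≠ s₀ := hscompl
    obtain ⟨hs1, hs2⟩ := hsW
    simp only [Set.mem_iInter, Set.mem_compl_iff, Set.mem_singleton_iff] at hs2
    have hav2 : ∀ j < n₀ + 2, j ≠ n₀ → s ≠ (m:ℂ) + j := by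
      intro j hj hjne
      exact hs2 j (Finset.mem_erase.mpr ⟨hjne, Finset.mem_range.mpr hj⟩)
    have havAll : ∀ j < (n₀+1) + 1, s ≠ (m:ℂ) + j := by
      intro j hj
      by_cases hje : j = n₀
      · rw [hje]; exact hsne
      · exact hav2 j hj hje
    have hs1' : s.re < (m:ℝ) + ((n₀:ℝ)+1) := hs1
    have hGg : Gg m α s = gK m α (n₀+2) s :=
      Gg_eq_of m α (n₀+1) s (by push_cast; linarith) havAll
    have hhh : hh m α n₀ s = (s - s₀) * gK m α (n₀+2) s := hh_eq m α n₀ s hsne hav2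
    have hsub : s - s₀ ≠ 0 := sub_ne_zero_of_ne hsne
    show Complex.I ^ (-(m:ℤ)) * Gg m α s = (Complex.I ^ (-(m:ℤ)) * hh m α n₀ s) / (s - s₀)
    rw [hGg]
    rw [hhh]
    field_simp
end
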